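/- arXiv:2312.00885 — 8 statements merged into one kernel-verified Lean document; each statement's English description precedes it below -/
import Mathlib

section
/- Let q be a prime power and let C be a minimal linear [n,k]_q code. Then every nonzero codeword of C has Hamming weight at least (k-1)(q-1)+1; in particular the minimum distance d of C satisfies d ≥ (k-1)(q-1)+1. -/
/-- The Hamming weight of a word: the number of nonzero coordinates. -/
noncomputable def wt {ι F : Type*} [Zero F] (c : ι → F) : ℕ := Set.ncard {i | c i ≠ 0}

/-- A linear code (a submodule of `ι → F`) is minimal if the support of every nonzero
codeword is minimal with respect to inclusion among supports of nonzero codewords. -/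
def IsMinimalCode {ι F : Type*} [Semiring F] (C : Submodule F (ι → F)) : Prop :=
  ∀ c ∈ C, c ≠ 0 → ∀ u ∈ C, u ≠ 0 →
    {i | u i ≠ 0} ⊆ {i | c i ≠ 0} → {i | u i ≠ 0} = {i | c i ≠ 0}

/-- Affine blocking set bound (Brouwer–Schrijver / Jamison): a set of points in `F^m`
meeting every affine hyperplane has at least `m (q-1) + 1` points. -/
lemma blocking_lemma {F : Type*} [Field F] [Fintype F] {m : ℕ} (hm : 1 ≤ m)
    (P : Finset (Fin m → F))
    (hP : ∀ α : Fin m → F, α ≠ 0 → ∀ β : F, ∃ p ∈ P, ∑ j, α j * p j = β) :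
    m * (Fintype.card F - 1) + 1 ≤ P.card := by
  classical
  by_contra hcard
  push_neg at hcard
  have hq2 : 2 ≤ Fintype.card F := Fintype.one_lt_card
  have hpos : 1 ≤ m * (Fintype.card F - 1) := Nat.mul_pos hm (by omega)
  -- get a point of P
  obtain ⟨p₀, hp₀, -⟩ := hP (fun _ => 1) (fun h => one_ne_zero (congrFun h ⟨0, hm⟩)) 0
  set Q : Finset (Fin m → F) := (P.image (fun p => p - p₀)).erase 0 with hQdef
  have hQprop : ∀ x : Fin m → F, x ≠ 0 → ∃ p ∈ Q, ∑ j, p j * x j = 1 := by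
    intro x hx
    obtain ⟨p, hp, hpx⟩ := hP x hx (1 + ∑ j, x j * p₀ j)
    have hsum : ∑ j, (p - p₀) j * x j = 1 := by
      have : ∑ j, (p - p₀) j * x j = (∑ j, x j * p j) - ∑ j, x j * p₀ j := by
        rw [← Finset.sum_sub_distrib]
        exact Finset.sum_congr rfl fun j _ => by simp [Pi.sub_apply]; ring
      rw [this, hpx]; ring
    refine ⟨p - p₀, Finset.mem_erase.2 ⟨?_, Finset.mem_image_of_mem _ hp⟩, hsum⟩
    intro h0
    rw [h0] at hsum
    simp at hsum
  have h0mem : (0 : Fin m → F) ∈ P.image (fun p => p - p₀) :=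
    Finset.mem_image.2 ⟨p₀, hp₀, sub_self p₀⟩
  have hQcard : Q.card < m * (Fintype.card F - 1) := by
    have h1 : Q.card = (P.image (fun p => p - p₀)).card - 1 :=
      Finset.card_erase_of_mem h0mem
    have h2 := Finset.card_image_le (s := P) (f := fun p => p - p₀)
    omega
  set f : MvPolynomial (Fin m) F :=
    ∏ p ∈ Q, (1 - ∑ j, MvPolynomial.C (p j) * MvPolynomial.X j) with hfdef
  have hdeg : f.totalDegree < (Fintype.card F - 1) * Fintype.card (Fin m) := by
    have h1 := MvPolynomial.totalDegree_finset_prod Q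
      (fun p => (1 - ∑ j, MvPolynomial.C (p j) * MvPolynomial.X j))
    have h2 : ∀ p ∈ Q,
        (1 - ∑ j, MvPolynomial.C (p j) * MvPolynomial.X j).totalDegree ≤ 1 := by
      intro p _
      have hs : (∑ j, MvPolynomial.C (p j) * MvPolynomial.X j :
          MvPolynomial (Fin m) F).totalDegree ≤ 1 := by
        refine (MvPolynomial.totalDegree_finset_sum _ _).trans
          (Finset.sup_le fun j _ => ?_)
        refine (MvPolynomial.totalDegree_mul _ _).trans ?_
        simp [MvPolynomial.totalDegree_X, MvPolynomial.totalDegree_C]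
      exact (MvPolynomial.totalDegree_sub _ _).trans
        (max_le (by simp [MvPolynomial.totalDegree_one]) hs)
    have h3 : f.totalDegree ≤ Q.card := by
      refine h1.trans ((Finset.sum_le_card_nsmul Q _ 1 h2).trans ?_)
      simp
    have heq : (Fintype.card F - 1) * Fintype.card (Fin m) = m * (Fintype.card F - 1) := by
      simp [Fintype.card_fin, Nat.mul_comm]
    rw [heq]
    exact lt_of_le_of_lt h3 hQcard
  have hsum := MvPolynomial.sum_eval_eq_zero f hdeg
  have heval : ∀ x : Fin m → F,
      MvPolynomial.eval x f = ∏ p ∈ Q, (1 - ∑ j, p j * x j) := by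
    intro x
    rw [hfdef, map_prod]
    exact Finset.prod_congr rfl fun p _ => by simp
  have h0 : MvPolynomial.eval (0 : Fin m → F) f = 1 := by
    rw [heval]; simp
  have hx0 : ∀ x : Fin m → F, x ≠ 0 → MvPolynomial.eval x f = 0 := by
    intro x hx
    obtain ⟨p, hpQ, hp1⟩ := hQprop x hx
    rw [heval]
    exact Finset.prod_eq_zero hpQ (by rw [hp1]; ring)
  have hone : (1 : F) = 0 := by
    rw [← h0, ← hsum]
    exact (Fintype.sum_eq_single 0 hx0).symm
  exact one_ne_zero hone

/-- Let `q` be a prime power and let `C` be a minimal linear `[n,k]_q` code.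
Then every nonzero codeword of `C` has Hamming weight at least `(k-1)(q-1)+1`;
in particular the minimum distance of `C` is at least `(k-1)(q-1)+1`. -/
theorem minimal_code_min_weight_lower_bound
    (q n k : ℕ) (hq : IsPrimePow q)
    (F : Type*) [Field F] [Fintype F] (hF : Fintype.card F = q)
    (C : Submodule F (Fin n → F)) (hk : Module.finrank F C = k)
    (hmin : IsMinimalCode C) :
    ∀ c ∈ C, c ≠ 0 → (k - 1) * (q - 1) + 1 ≤ wt c := by
  classical
  intro c hcC hc0
  have hSfin : {i : Fin n | c i ≠ 0}.Finite := Set.toFinite _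
  have hwt : wt c = hSfin.toFinset.card := Set.ncard_eq_toFinset_card _ hSfin
  set S : Finset (Fin n) := hSfin.toFinset with hSdef
  have hSne : ∃ i, c i ≠ 0 := by
    by_contra h
    push_neg at h
    exact hc0 (funext fun i => h i)
  rcases Nat.lt_or_ge k 2 with hk1 | hk2
  · -- trivial case k ≤ 1
    have h1 : k - 1 = 0 := by omega
    rw [h1, hwt]
    obtain ⟨i, hi⟩ := hSne
    have : i ∈ S := hSfin.mem_toFinset.2 hi
    have := Finset.card_pos.2 ⟨i, this⟩
    omega
  -- key property from minimality
  · have key : ∀ v ∈ C, (∀ γ : F, v ≠ γ • c) → ∀ β : F,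
        ∃ i, c i ≠ 0 ∧ v i = β * c i := by
      intro v hvC hv β
      by_contra hcon
      push_neg at hcon
      set w : Fin n → F := v - β • c with hwdef
      have hwC : w ∈ C := C.sub_mem hvC (C.smul_mem β hcC)
      have hw0 : w ≠ 0 := by
        intro h
        exact hv β (by rwa [hwdef, sub_eq_zero] at h)
      have hsub : {i | c i ≠ 0} ⊆ {i | w i ≠ 0} := by
        intro i hi
        have h := hcon i hi
        simp only [hwdef, Set.mem_setOf_eq, Pi.sub_apply, Pi.smul_apply, smul_eq_mul]
        exact fun h0 => h (by linear_combination h0)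
      have heq := hmin w hwC hw0 c hcC hc0 hsub
      obtain ⟨i₀, hi₀⟩ := hSne
      set u : Fin n → F := w - (w i₀ / c i₀) • c with hudef
      have huC : u ∈ C := C.sub_mem hwC (C.smul_mem _ hcC)
      have hu0 : u ≠ 0 := by
        intro h
        rw [hudef, sub_eq_zero] at h
        refine hv (β + w i₀ / c i₀) ?_
        rw [add_smul, ← h, hwdef]
        abel
      have husub : {i | u i ≠ 0} ⊆ {i | c i ≠ 0} := by
        intro i hi
        simp only [Set.mem_setOf_eq] at hi ⊢
        by_contra hci
        have hwi : w i = 0 := by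
          by_contra hwi
          exact (Set.ext_iff.1 heq i).2 hwi hci
        apply hi
        rw [hudef]
        simp [hwi, hci]
      have hfin := hmin c hcC hc0 u huC hu0 husub
      have hui₀ : u i₀ = 0 := by
        simp only [hudef, Pi.sub_apply, Pi.smul_apply, smul_eq_mul]
        field_simp
        ring
      exact (Set.ext_iff.1 hfin i₀).2 hi₀ hui₀
    -- dimension setup
    set m : ℕ := k - 1 with hmdef
    have hm1 : 1 ≤ m := by omega
    set cc : C := ⟨c, hcC⟩ with hccdef
    have hcc0 : cc ≠ 0 := fun h => hc0 (congrArg Subtype.val h)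
    set W : Submodule F C := Submodule.span F {cc} with hWdef
    have hWrank : Module.finrank F W = 1 := finrank_span_singleton hcc0
    have hquot : Module.finrank F (C ⧸ W) = m := by
      have h := Submodule.finrank_quotient_add_finrank W
      rw [hWrank, hk] at h
      omega
    let b : Module.Basis (Fin m) F (C ⧸ W) := Module.finBasisOfFinrankEq F _ hquot
    have hsurj := Submodule.Quotient.mk_surjective W
    choose v hv using fun j => hsurj (b j)
    set P : Finset (Fin m → F) :=
      S.image (fun i => fun j => (v j : Fin n → F) i * (c i)⁻¹) with hPdef
    have hPprop : ∀ α : Fin m → F, α ≠ 0 → ∀ β : F, ∃ p ∈ P, ∑ j, α j * p j = β := by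
      intro α hα β
      set vα : C := ∑ j, α j • v j with hvαdef
      have hvαnot : ∀ γ : F, (vα : Fin n → F) ≠ γ • c := by
        intro γ hγ
        have hmem : vα ∈ W := by
          have : vα = γ • cc := Subtype.ext (by rw [hγ]; rfl)
          rw [this]
          exact W.smul_mem γ (Submodule.mem_span_singleton_self cc)
        have hmk : Submodule.Quotient.mk (p := W) vα = 0 :=
          (Submodule.Quotient.mk_eq_zero W).2 hmem
        have hmk2 : (∑ j, α j • b j : C ⧸ W) = 0 := by
          rw [← hmk, hvαdef]
          rw [show (Submodule.Quotient.mk (p := W) (∑ j, α j • v j)) =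
            W.mkQ (∑ j, α j • v j) from rfl, map_sum]
          exact Finset.sum_congr rfl fun j _ => by
            rw [map_smul, Submodule.mkQ_apply, hv j]
        have := Fintype.linearIndependent_iff.1 b.linearIndependent α hmk2
        exact hα (funext this)
      obtain ⟨i, hci, hvi⟩ := key (vα : Fin n → F) vα.2 hvαnot β
      refine ⟨fun j => (v j : Fin n → F) i * (c i)⁻¹,
        Finset.mem_image_of_mem _ (hSfin.mem_toFinset.2 hci), ?_⟩
      have hval : (vα : Fin n → F) i = ∑ j, α j * (v j : Fin n → F) i := by
        rw [hvαdef]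
        simp [AddSubmonoidClass.coe_finset_sum]
      calc ∑ j, α j * ((v j : Fin n → F) i * (c i)⁻¹)
          = (∑ j, α j * (v j : Fin n → F) i) * (c i)⁻¹ := by
            rw [Finset.sum_mul]
            exact Finset.sum_congr rfl fun j _ => by ring
        _ = β := by rw [← hval, hvi]; field_simp
    have hcard := blocking_lemma hm1 P hPprop
    rw [hF] at hcard
    have hPS : P.card ≤ S.card := Finset.card_image_le
    rw [hwt]
    calc (k - 1) * (q - 1) + 1 = m * (q - 1) + 1 := by rw [hmdef]
      _ ≤ P.card := hcard
      _ ≤ S.card := hPS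
end

section
/- Let q be a prime power and let C be a minimal linear [n,k]_q code. Then every nonzero codeword of C has Hamming weight at most n-k+1, i.e., the maximum nonzero weight w_max of C satisfies w_max ≤ n-k+1. -/
/-- Let `q` be a prime power and let `C` be a minimal linear `[n,k]_q` code.
Then every nonzero codeword of `C` has Hamming weight at most `n-k+1`, i.e.,
the maximum nonzero weight of `C` satisfies `w_max ≤ n-k+1`. -/
theorem minimal_code_max_weight_upper_bound
    (q n k : ℕ) (hq : IsPrimePow q)
    (F : Type*) [Field F] [Fintype F] (hF : Fintype.card F = q)
    (C : Submodule F (Fin n → F)) (hk : Module.finrank F C = k)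
    (hmin : IsMinimalCode C) :
    ∀ c ∈ C, c ≠ 0 → wt c ≤ n - k + 1 := by
  classical
  intro c hc hcne
  set S : Set (Fin n) := {i | c i ≠ 0} with hS
  have hSne : S.Nonempty := by
    rcases Function.ne_iff.mp hcne with ⟨i, hi⟩
    exact ⟨i, hi⟩
  obtain ⟨i0, hi0⟩ := hSne
  set T : Set (Fin n) := Sᶜ ∪ {i0} with hT
  let f : C →ₗ[F] (T → F) :=
    { toFun := fun u t => u.val t
      map_add' := by intros; rfl
      map_smul' := by intros; rfl }
  have hinj : Function.Injective f := by
    rw [injective_iff_map_eq_zero]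
    intro u hu
    by_contra hune
    have hsubs : {i | u.val i ≠ 0} ⊆ S := by
      intro i hi
      by_contra hiS
      have h0 := congrFun hu ⟨i, Or.inl hiS⟩
      exact hi h0
    have hne0 : (u : Fin n → F) ≠ 0 := fun h => hune (Subtype.ext h)
    have heq := hmin c hc hcne u.val u.2 hne0 hsubs
    have hu0 : i0 ∈ {i | u.val i ≠ 0} := by rw [heq]; exact hi0
    exact hu0 (congrFun hu ⟨i0, Or.inr rfl⟩)
  have hdim : k ≤ Fintype.card T := by
    rw [← hk]
    calc Module.finrank F C ≤ Module.finrank F (T → F) :=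
          LinearMap.finrank_le_finrank_of_injective hinj
      _ = Fintype.card T := Module.finrank_pi F
  have hcardT : Fintype.card T = T.ncard := by
    rw [Set.ncard_eq_toFinset_card', Set.toFinset_card]
  have hsum : S.ncard + Sᶜ.ncard = n := by
    rw [Set.ncard_add_ncard_compl]
    simp
  have hTle : T.ncard ≤ Sᶜ.ncard + 1 := by
    calc T.ncard ≤ Sᶜ.ncard + ({i0} : Set (Fin n)).ncard := Set.ncard_union_le _ _
      _ = Sᶜ.ncard + 1 := by rw [Set.ncard_singleton]
  have hwt : wt c = S.ncard := rfl
  omega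
end

section
/- Let q be a prime power, Δ and t positive integers, and let C be a Δ-divisible minimal linear [n,k]_q code. Then the t-fold repetition of C (each codeword c is replaced by t concatenated copies of c) is a (t·Δ)-divisible minimal linear [t·n, k]_q code. In particular, m(k,q;Δ) ≤ m(k,q;t·Δ) ≤ t·m(k,q;Δ) and m(k,q) ≤ m(k,q;Δ) ≤ Δ·m(k,q). -/
/-- `mDiv F k Δ` is the minimum possible length `n` of a `Δ`-divisible minimal `[n,k]` code
over the field `F`; for `Fintype.card F = q` this is `m(k,q;Δ)`, and `mDiv F k 1 = m(k,q)`. -/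
noncomputable def mDiv (F : Type*) [Field F] (k Δ : ℕ) : ℕ :=
  sInf {n : ℕ | ∃ C : Submodule F (Fin n → F),
    Module.finrank F C = k ∧ IsMinimalCode C ∧ ∀ c ∈ C, Δ ∣ wt c}

/-- The `t`-fold repetition map: each word `c` of length `n` is replaced by `t`
concatenated copies of `c`. -/
def repMap (F : Type*) [Field F] (t n : ℕ) : (Fin n → F) →ₗ[F] (Fin (t * n) → F) where
  toFun c := fun j => c (finProdFinEquiv.symm j).2
  map_add' _ _ := rfl
  map_smul' _ _ := rfl

section helpers
variable {F : Type*} [Field F] {t n : ℕ}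

lemma rep_surj (ht : 0 < t) :
    Function.Surjective (fun j : Fin (t * n) => (finProdFinEquiv.symm j).2) := by
  intro i
  exact ⟨finProdFinEquiv (⟨0, ht⟩, i), by simp⟩

lemma rep_inj (ht : 0 < t) : Function.Injective (repMap F t n) := by
  intro a b h
  funext i
  have := congrFun h (finProdFinEquiv ((⟨0, ht⟩ : Fin t), i))
  simpa only [repMap, LinearMap.coe_mk, AddHom.coe_mk,
    Equiv.symm_apply_apply] using this

lemma rep_support (c : Fin n → F) :
    {j | repMap F t n c j ≠ 0} =
      (fun j : Fin (t * n) => (finProdFinEquiv.symm j).2) ⁻¹' {i | c i ≠ 0} := rfl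

lemma rep_wt (c : Fin n → F) : wt (repMap F t n c) = t * wt c := by
  have h : {j | repMap F t n c j ≠ 0} =
      finProdFinEquiv.symm ⁻¹' ((Set.univ : Set (Fin t)) ×ˢ {i | c i ≠ 0}) := by
    ext j; simp [repMap, Set.mem_prod]
  have h2 : finProdFinEquiv.symm ⁻¹' ((Set.univ : Set (Fin t)) ×ˢ {i | c i ≠ 0}) =
      finProdFinEquiv '' ((Set.univ : Set (Fin t)) ×ˢ {i | c i ≠ 0}) :=
    (Equiv.image_eq_preimage_symm _ _).symm
  rw [wt, h, h2, Set.ncard_image_of_injective _ finProdFinEquiv.injective]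
  rw [show wt c = Nat.card {i | c i ≠ 0} from (Nat.card_coe_set_eq _).symm,
    show Set.ncard ((Set.univ : Set (Fin t)) ×ˢ {i | c i ≠ 0})
       = Nat.card ↥((Set.univ : Set (Fin t)) ×ˢ {i | c i ≠ 0})
       from (Nat.card_coe_set_eq _).symm,
    Nat.card_congr (Equiv.Set.prod _ _), Nat.card_prod,
    Nat.card_congr (Equiv.Set.univ _), Nat.card_eq_fintype_card, Fintype.card_fin]

/-- The key repetition lemma. -/
lemma rep_code (ht : 0 < t) {k Δ : ℕ} (C : Submodule F (Fin n → F))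
    (hk : Module.finrank F C = k) (hmin : IsMinimalCode C) (hdiv : ∀ c ∈ C, Δ ∣ wt c) :
    Module.finrank F (C.map (repMap F t n)) = k ∧
    IsMinimalCode (C.map (repMap F t n)) ∧
    ∀ c ∈ C.map (repMap F t n), (t * Δ) ∣ wt c := by
  refine ⟨?_, ?_, ?_⟩
  · rw [← hk]
    exact (Submodule.equivMapOfInjective _ (rep_inj ht) C).symm.finrank_eq
  · rintro _ ⟨c, hc, rfl⟩ hc0 _ ⟨u, hu, rfl⟩ hu0 hsub
    have hc0' : c ≠ 0 := fun h => hc0 (by rw [h, map_zero])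
    have hu0' : u ≠ 0 := fun h => hu0 (by rw [h, map_zero])
    rw [rep_support, rep_support] at hsub ⊢
    have hr : {i | c i ≠ 0} ⊆ Set.range
        (fun j : Fin (t * n) => (finProdFinEquiv.symm j).2) := by
      rw [Set.range_eq_univ.mpr (rep_surj ht)]; exact Set.subset_univ _
    have hr' : {i | u i ≠ 0} ⊆ Set.range
        (fun j : Fin (t * n) => (finProdFinEquiv.symm j).2) := by
      rw [Set.range_eq_univ.mpr (rep_surj ht)]; exact Set.subset_univ _
    have := hmin c hc hc0' u hu hu0'
      ((Set.preimage_subset_preimage_iff hr').mp hsub)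
    rw [this]
  · rintro _ ⟨c, hc, rfl⟩
    rw [rep_wt]
    exact mul_dvd_mul_left t (hdiv c hc)

end helpers

/-- Let `q` be a prime power, `Δ` and `t` positive integers, and let `C` be a `Δ`-divisible
minimal linear `[n,k]_q` code. Then the `t`-fold repetition of `C` is a `(t·Δ)`-divisible
minimal linear `[t·n,k]_q` code. In particular `m(k,q;Δ) ≤ m(k,q;t·Δ) ≤ t·m(k,q;Δ)` and
`m(k,q) ≤ m(k,q;Δ) ≤ Δ·m(k,q)`. -/
theorem repetition_of_divisible_minimal_code
    (q n k t Δ : ℕ) (hq : IsPrimePow q) (ht : 0 < t) (hΔ : 0 < Δ)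
    (F : Type*) [Field F] [Fintype F] (hF : Fintype.card F = q)
    (C : Submodule F (Fin n → F)) (hk : Module.finrank F C = k)
    (hmin : IsMinimalCode C) (hdiv : ∀ c ∈ C, Δ ∣ wt c) :
    Module.finrank F (C.map (repMap F t n)) = k ∧
    IsMinimalCode (C.map (repMap F t n)) ∧
    (∀ c ∈ C.map (repMap F t n), (t * Δ) ∣ wt c) ∧
    mDiv F k Δ ≤ mDiv F k (t * Δ) ∧ mDiv F k (t * Δ) ≤ t * mDiv F k Δ ∧
    mDiv F k 1 ≤ mDiv F k Δ ∧ mDiv F k Δ ≤ Δ * mDiv F k 1 := by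
  obtain ⟨h1, h2, h3⟩ := rep_code ht C hk hmin hdiv
  -- the defining sets
  set S : ℕ → Set ℕ := fun Δ' => {m : ℕ | ∃ C : Submodule F (Fin m → F),
    Module.finrank F C = k ∧ IsMinimalCode C ∧ ∀ c ∈ C, Δ' ∣ wt c} with hS
  have hmem : ∀ {t' Δ' : ℕ}, 0 < t' → ∀ m ∈ S Δ', t' * m ∈ S (t' * Δ') := by
    rintro t' Δ' ht' m ⟨C', hk', hmin', hdiv'⟩
    obtain ⟨a, b, c⟩ := rep_code ht' C' hk' hmin' hdiv'
    exact ⟨C'.map (repMap F t' m), a, b, c⟩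
  have hsub1 : S (t * Δ) ⊆ S Δ := by
    rintro m ⟨C', hk', hmin', hdiv'⟩
    exact ⟨C', hk', hmin', fun c hc => dvd_trans (Dvd.intro_left t rfl) (hdiv' c hc)⟩
  have hsubone : ∀ Δ', S Δ' ⊆ S 1 := by
    rintro Δ' m ⟨C', hk', hmin', hdiv'⟩
    exact ⟨C', hk', hmin', fun c hc => one_dvd _⟩
  have hnΔ : n ∈ S Δ := ⟨C, hk, hmin, hdiv⟩
  have hntΔ : t * n ∈ S (t * Δ) := hmem ht n hnΔ
  have hn1 : n ∈ S 1 := hsubone Δ hnΔ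
  refine ⟨h1, h2, h3, ?_, ?_, ?_, ?_⟩
  · exact Nat.sInf_le (hsub1 (Nat.sInf_mem ⟨t * n, hntΔ⟩))
  · have := hmem ht _ (Nat.sInf_mem (⟨n, hnΔ⟩ : (S Δ).Nonempty))
    exact Nat.sInf_le this
  · exact Nat.sInf_le (hsubone Δ (Nat.sInf_mem ⟨n, hnΔ⟩))
  · have := hmem hΔ _ (Nat.sInf_mem (⟨n, hn1⟩ : (S 1).Nonempty))
    rw [mul_one] at this
    exact Nat.sInf_le this
end

section
/- Let q be a prime power and Δ, t positive integers with gcd(t,q) = 1. Then m(k,q;t·Δ) = t·m(k,q;Δ), i.e., the minimum length of a (t·Δ)-divisible minimal k-dimensional code over F_q equals t times the minimum length of a Δ-divisible minimal k-dimensional code over F_q. -/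
/-! ### Auxiliary machinery -/

open Function Finset
open scoped Classical

lemma wt_eq_card {ι F : Type*} [Fintype ι] [Zero F] (c : ι → F) :
    wt c = (Finset.univ.filter (fun i => c i ≠ 0)).card := by
  rw [wt, Set.ncard_eq_toFinset_card']
  simp [Set.toFinset_setOf]


def ZRel {ι F : Type*} [Semiring F] (C : Submodule F (ι → F)) (i j : ι) : Prop :=
  ∀ c ∈ C, (c i = 0 ↔ c j = 0)

def Nz {ι F : Type*} [Semiring F] (C : Submodule F (ι → F)) (i : ι) : Prop :=
  ∃ c ∈ C, c i ≠ 0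


lemma ZRel.nz {ι F : Type*} [Semiring F] {C : Submodule F (ι → F)} {i j : ι}
    (h : ZRel C i j) (hj : Nz C j) : Nz C i := by
  obtain ⟨c, hc, hcj⟩ := hj
  exact ⟨c, hc, fun h0 => hcj ((h c hc).mp h0)⟩


lemma ZRel.refl {ι F : Type*} [Semiring F] (C : Submodule F (ι → F)) (i : ι) : ZRel C i i :=
  fun _ _ => Iff.rfl

lemma ZRel.symm' {ι F : Type*} [Semiring F] {C : Submodule F (ι → F)} {i j : ι}
    (h : ZRel C i j) : ZRel C j i := fun c hc => (h c hc).symm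

lemma ZRel.trans' {ι F : Type*} [Semiring F] {C : Submodule F (ι → F)} {i j l : ι}
    (h : ZRel C i j) (h' : ZRel C j l) : ZRel C i l := fun c hc => (h c hc).trans (h' c hc)


section Counting
variable {F M : Type*} [Field F] [AddCommGroup M] [Module F M]

lemma fiber_card {V : Type*} [AddCommGroup V] [Module F V]
    (L : M →ₗ[F] V) (hs : Surjective L) (v : V) :
    Nat.card {x : M // L x = v} = Nat.card (LinearMap.ker L) := by
  obtain ⟨x₀, hx₀⟩ := hs v
  apply Nat.card_congr
  refine ⟨fun y => ⟨y.1 - x₀, by simp [LinearMap.mem_ker, y.2, hx₀]⟩,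
    fun z => ⟨z.1 + x₀, by have := z.2; simp only [LinearMap.mem_ker] at this; simp [this, hx₀]⟩,
    fun y => by ext; simp, fun z => by ext; simp⟩

lemma surj_of_ne_zero (ψ : M →ₗ[F] F) (h : ψ ≠ 0) : Surjective ψ := by
  obtain ⟨x, hx⟩ : ∃ x, ψ x ≠ 0 := by
    by_contra hc
    push_neg at hc
    exact h (by ext y; simp [hc y])
  intro a
  exact ⟨(a / ψ x) • x, by rw [map_smul, smul_eq_mul, div_mul_cancel₀ a hx]⟩

lemma surj_pair (ψ χ : M →ₗ[F] F) (hψ : ψ ≠ 0)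
    (h : ∃ x, ψ x = 0 ∧ χ x ≠ 0) : Surjective (ψ.prod χ) := by
  obtain ⟨x, hx0, hx1⟩ := h
  obtain ⟨y₀, hy₀⟩ : ∃ y, ψ y ≠ 0 := by
    by_contra hc
    push_neg at hc
    exact hψ (by ext z; simp [hc z])
  set y := y₀ - (χ y₀ / χ x) • x with hy
  have hyψ : ψ y ≠ 0 := by simp [hy, hx0, hy₀]
  have hyχ : χ y = 0 := by simp [hy]; field_simp; simp
  rintro ⟨a, b⟩
  refine ⟨(a / ψ y) • y + (b / χ x) • x, ?_⟩
  simp [LinearMap.prod_apply, hx0, hyχ]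
  constructor <;> field_simp

lemma card_eq_mul_ker {V : Type*} [AddCommGroup V] [Module F V]
    (L : M →ₗ[F] V) (hs : Surjective L) :
    Nat.card M = Nat.card V * Nat.card (LinearMap.ker L) := by
  rw [Submodule.card_eq_card_quotient_mul_card (LinearMap.ker L), mul_comm]
  congr 1
  exact Nat.card_congr (L.quotKerEquivOfSurjective hs).toEquiv


section Core
variable [Fintype F] {ι : Type*} [Fintype ι]

lemma class_card_dvd (C : Submodule F (ι → F)) (t : ℕ)
    (hcop : Nat.Coprime t (Fintype.card F))
    (hdiv : ∀ c ∈ C, t ∣ wt c) (i₀ : ι) (h0 : Nz C i₀) :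
    t ∣ (univ.filter (fun j => ZRel C j i₀)).card := by
  haveI : Fintype C := Fintype.ofFinite C
  set q := Fintype.card F with hq
  have hq2 : 2 ≤ q := Fintype.one_lt_card
  set k := Module.finrank F C with hk
  set φ : ι → (↥C →ₗ[F] F) := fun i => (LinearMap.proj i).comp C.subtype with hφdef
  have hφapp : ∀ i (c : C), φ i c = (c : ι → F) i := fun i c => rfl
  have hcardC : Nat.card C = q ^ k := by
    rw [Nat.card_eq_fintype_card, hq, hk]; exact Module.card_eq_pow_finrank
  have hφne : ∀ i, Nz C i → φ i ≠ 0 := by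
    intro i hi
    obtain ⟨c, hc, hci⟩ := hi
    intro hzero
    exact hci (by simpa [hφapp] using DFunLike.congr_fun hzero (⟨c, hc⟩ : C))
  have hzero' : ∀ i, ¬ Nz C i → ∀ c : C, (c : ι → F) i = 0 := by
    intro i hi c
    by_contra h
    exact hi ⟨c, c.2, h⟩
  have hker : ∀ i, Nz C i → q * Nat.card (LinearMap.ker (φ i)) = q ^ k := by
    intro i hi
    have := card_eq_mul_ker (φ i) (surj_of_ne_zero _ (hφne i hi))
    rw [hcardC, Nat.card_eq_fintype_card] at this
    exact this.symm
  have hk1 : 1 ≤ k := by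
    by_contra h
    have hk0 : k = 0 := by omega
    have := hker i₀ h0
    rw [hk0, pow_zero] at this
    haveI : Nonempty (LinearMap.ker (φ i₀)) := ⟨0⟩
    have hp := Nat.card_pos (α := LinearMap.ker (φ i₀))
    nlinarith
  have hkeru : ∀ i, Nz C i → Nat.card (LinearMap.ker (φ i)) = q ^ (k - 1) := by
    intro i hi
    have h1 := hker i hi
    have h2 : q ^ k = q * q ^ (k - 1) := by
      rw [← pow_succ']
      congr 1
      omega
    rw [h2] at h1
    exact Nat.eq_of_mul_eq_mul_left (by omega) h1
  -- pair fiber count for coordinates in a different class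
  have hw : ∀ i, Nz C i → ¬ ZRel C i i₀ →
      2 ≤ k ∧ Nat.card {c : C // (c : ι → F) i₀ = 1 ∧ (c : ι → F) i = 0} = q ^ (k - 2) := by
    intro i hi hrel
    have hex : ∃ c ∈ C, ¬ ((c : ι → F) i = 0 ↔ (c : ι → F) i₀ = 0) := by
      rw [ZRel] at hrel
      push_neg at hrel
      obtain ⟨c, hc, h⟩ := hrel
      exact ⟨c, hc, by tauto⟩
    obtain ⟨c, hc, hcc⟩ := hex
    have hcases : ((c : ι → F) i = 0 ∧ (c : ι → F) i₀ ≠ 0) ∨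
        ((c : ι → F) i ≠ 0 ∧ (c : ι → F) i₀ = 0) := by tauto
    have hfib : Nat.card {x : C // (x : ι → F) i₀ = 1 ∧ (x : ι → F) i = 0} * (q * q) = q ^ k := by
      rcases hcases with ⟨h1, h2⟩ | ⟨h1, h2⟩
      · -- pair (φ i).prod (φ i₀), fiber at (0,1)
        have hsurj : Surjective ((φ i).prod (φ i₀)) :=
          surj_pair _ _ (hφne i hi) ⟨⟨c, hc⟩, by simpa [hφapp] using ⟨h1, h2⟩⟩
        have hfc := fiber_card _ hsurj (0, 1)
        have hcm := card_eq_mul_ker _ hsurj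
        rw [hcardC, Nat.card_prod, Nat.card_eq_fintype_card, ← hq] at hcm
        have he : Nat.card {x : C // (x : ι → F) i₀ = 1 ∧ (x : ι → F) i = 0}
            = Nat.card {x : C // ((φ i).prod (φ i₀)) x = (0, 1)} := by
          apply Nat.card_congr
          apply Equiv.subtypeEquivRight
          intro x
          simp [LinearMap.prod_apply, hφapp, Prod.ext_iff, and_comm]
        rw [he, hfc, hcm]
        ring
      · have hsurj : Surjective ((φ i₀).prod (φ i)) :=
          surj_pair _ _ (hφne i₀ h0) ⟨⟨c, hc⟩, by simpa [hφapp] using ⟨h2, h1⟩⟩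
        have hfc := fiber_card _ hsurj (1, 0)
        have hcm := card_eq_mul_ker _ hsurj
        rw [hcardC, Nat.card_prod, Nat.card_eq_fintype_card, ← hq] at hcm
        have he : Nat.card {x : C // (x : ι → F) i₀ = 1 ∧ (x : ι → F) i = 0}
            = Nat.card {x : C // ((φ i₀).prod (φ i)) x = (1, 0)} := by
          apply Nat.card_congr
          apply Equiv.subtypeEquivRight
          intro x
          simp [LinearMap.prod_apply, hφapp, Prod.ext_iff]
        rw [he, hfc, hcm]
        ring
    have hqk : 0 < q ^ k := pow_pos (by omega) k
    have hpos : 1 ≤ Nat.card {x : C // (x : ι → F) i₀ = 1 ∧ (x : ι → F) i = 0} := by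
      by_contra h
      have h0' : Nat.card {x : C // (x : ι → F) i₀ = 1 ∧ (x : ι → F) i = 0} = 0 := by omega
      rw [h0', zero_mul] at hfib
      omega
    have hk2 : 2 ≤ k := by
      by_contra h
      have : k = 1 := by omega
      rw [this, pow_one] at hfib
      nlinarith [hpos, hq2]
    refine ⟨hk2, ?_⟩
    have h2 : q ^ k = q ^ (k - 2) * (q * q) := by
      rw [← mul_assoc, ← pow_succ, ← pow_succ]
      congr 1
      omega
    rw [h2] at hfib
    exact Nat.eq_of_mul_eq_mul_right (by positivity) hfib
  -- the affine slice A = {c ∈ C : c i₀ = 1}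
  set A : Finset C := univ.filter (fun c : ↥C => (c : ι → F) i₀ = 1) with hA
  have hAcard : A.card = q ^ (k - 1) := by
    have hsurj := surj_of_ne_zero _ (hφne i₀ h0)
    have h1 := fiber_card (φ i₀) hsurj 1
    have he : Nat.card {x : C // φ i₀ x = 1} = A.card := by
      rw [Nat.card_eq_fintype_card, hA, Fintype.card_subtype]
      simp only [hφapp]
    rw [← he, h1, hkeru i₀ h0]
  have hC' : Fintype.card C = q ^ k := by rw [← Nat.card_eq_fintype_card, hcardC]
  set m := ((univ.filter (fun i => Nz C i)).filter (fun i => ZRel C i i₀)).card with hm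
  set D := ((univ.filter (fun i => Nz C i)).filter (fun i => ¬ ZRel C i i₀)).card with hD
  set N := (univ.filter (fun i : ι => Nz C i)).card with hN
  have hND : m + D = N := card_filter_add_card_filter_not _
  have hsum : ∀ (B : Finset C), ∑ c ∈ B, wt (c : ι → F)
      = ∑ i : ι, (B.filter fun c : ↥C => (c : ι → F) i ≠ 0).card := by
    intro B
    calc ∑ c ∈ B, wt (c : ι → F)
        = ∑ c ∈ B, ∑ i : ι, if (c : ι → F) i ≠ 0 then 1 else 0 := by
          refine sum_congr rfl fun c _ => ?_
          rw [wt_eq_card, card_filter]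
      _ = ∑ i : ι, ∑ c ∈ B, if (c : ι → F) i ≠ 0 then 1 else 0 := sum_comm
      _ = _ := by
          refine sum_congr rfl fun i _ => ?_
          rw [card_filter]
  have hsplit : ∀ f : ι → ℕ, ∑ i : ι, f i =
      ((∑ i ∈ (univ.filter (fun i => Nz C i)).filter (fun i => ZRel C i i₀), f i)
      + ∑ i ∈ (univ.filter (fun i => Nz C i)).filter (fun i => ¬ ZRel C i i₀), f i)
      + ∑ i ∈ univ.filter (fun i => ¬ Nz C i), f i := by
    intro f
    rw [sum_filter_add_sum_filter_not (univ.filter (fun i => Nz C i)) (fun i => ZRel C i i₀) f,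
      sum_filter_add_sum_filter_not univ (fun i => Nz C i) f]
  -- total weight sum
  have hS : ∑ c ∈ (univ : Finset C), wt (c : ι → F) = N * (q ^ k - q ^ (k - 1)) := by
    rw [hsum univ, ← sum_filter_add_sum_filter_not univ (fun i => Nz C i)]
    have e3 : ∑ i ∈ univ.filter (fun i => ¬ Nz C i),
        ((univ : Finset C).filter fun c : ↥C => (c : ι → F) i ≠ 0).card = 0 := by
      refine sum_eq_zero fun i hi => ?_
      simp only [mem_filter, mem_univ, true_and] at hi
      rw [card_eq_zero, filter_eq_empty_iff]
      intro c _
      simp [hzero' i hi c]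
    have e1 : ∑ i ∈ univ.filter (fun i => Nz C i),
        ((univ : Finset C).filter fun c : ↥C => (c : ι → F) i ≠ 0).card
        = N * (q ^ k - q ^ (k - 1)) := by
      calc ∑ i ∈ univ.filter (fun i => Nz C i),
          ((univ : Finset C).filter fun c : ↥C => (c : ι → F) i ≠ 0).card
          = ∑ _i ∈ univ.filter (fun i => Nz C i), (q ^ k - q ^ (k - 1)) := by
            refine sum_congr rfl fun i hi => ?_
            simp only [mem_filter, mem_univ, true_and] at hi
            have hpm := card_filter_add_card_filter_not
              (s := (univ : Finset C)) (p := fun c : ↥C => (c : ι → F) i ≠ 0)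
            simp only [not_not] at hpm
            have hz : ((univ : Finset C).filter fun c : ↥C => (c : ι → F) i = 0).card
                = q ^ (k - 1) := by
              rw [← Fintype.card_subtype, ← Nat.card_eq_fintype_card, ← hkeru i hi]
              apply Nat.card_congr
              apply Equiv.subtypeEquivRight
              intro x
              simp [LinearMap.mem_ker, hφapp]
            rw [card_univ, hC', hz] at hpm
            omega
        _ = N * (q ^ k - q ^ (k - 1)) := by rw [sum_const, smul_eq_mul, hN]
    rw [e1, e3, add_zero]
  -- sliced weight sum
  have hT : ∑ c ∈ A, wt (c : ι → F) = m * q ^ (k - 1) + D * (q ^ (k - 1) - q ^ (k - 2)) := by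
    rw [hsum A, hsplit]
    have e3 : ∑ i ∈ univ.filter (fun i => ¬ Nz C i),
        (A.filter fun c : ↥C => (c : ι → F) i ≠ 0).card = 0 := by
      refine sum_eq_zero fun i hi => ?_
      simp only [mem_filter, mem_univ, true_and] at hi
      rw [card_eq_zero, filter_eq_empty_iff]
      intro c _
      simp [hzero' i hi c]
    have e1 : ∑ i ∈ (univ.filter (fun i => Nz C i)).filter (fun i => ZRel C i i₀),
        (A.filter fun c : ↥C => (c : ι → F) i ≠ 0).card = m * q ^ (k - 1) := by
      calc ∑ i ∈ (univ.filter (fun i => Nz C i)).filter (fun i => ZRel C i i₀),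
          (A.filter fun c : ↥C => (c : ι → F) i ≠ 0).card
          = ∑ _i ∈ (univ.filter (fun i => Nz C i)).filter (fun i => ZRel C i i₀),
              q ^ (k - 1) := by
            refine sum_congr rfl fun i hi => ?_
            simp only [mem_filter, mem_univ, true_and] at hi
            have hfull : A.filter (fun c : ↥C => (c : ι → F) i ≠ 0) = A := by
              refine filter_true_of_mem fun c hc => ?_
              rw [hA, mem_filter] at hc
              intro hzero
              have := (hi.2 (c : ι → F) c.2).mp hzero
              rw [hc.2] at this
              exact one_ne_zero this
            rw [hfull, hAcard]
        _ = m * q ^ (k - 1) := by rw [sum_const, smul_eq_mul, hm]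
    have e2 : ∑ i ∈ (univ.filter (fun i => Nz C i)).filter (fun i => ¬ ZRel C i i₀),
        (A.filter fun c : ↥C => (c : ι → F) i ≠ 0).card
        = D * (q ^ (k - 1) - q ^ (k - 2)) := by
      calc ∑ i ∈ (univ.filter (fun i => Nz C i)).filter (fun i => ¬ ZRel C i i₀),
          (A.filter fun c : ↥C => (c : ι → F) i ≠ 0).card
          = ∑ _i ∈ (univ.filter (fun i => Nz C i)).filter (fun i => ¬ ZRel C i i₀),
              (q ^ (k - 1) - q ^ (k - 2)) := by
            refine sum_congr rfl fun i hi => ?_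
            simp only [mem_filter, mem_univ, true_and] at hi
            have hpm := card_filter_add_card_filter_not
              (s := A) (p := fun c : ↥C => (c : ι → F) i ≠ 0)
            simp only [not_not] at hpm
            have hz : (A.filter fun c : ↥C => (c : ι → F) i = 0).card = q ^ (k - 2) := by
              rw [hA, filter_filter, ← Fintype.card_subtype, ← Nat.card_eq_fintype_card]
              exact (hw i hi.1 hi.2).2
            rw [hAcard, hz] at hpm
            omega
        _ = D * (q ^ (k - 1) - q ^ (k - 2)) := by rw [sum_const, smul_eq_mul, hD]
    rw [e1, e2, e3, add_zero]
  have hTd : t ∣ m * q ^ (k - 1) + D * (q ^ (k - 1) - q ^ (k - 2)) := by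
    rw [← hT]
    exact dvd_sum fun c _ => hdiv (c : ι → F) c.2
  have hSd : t ∣ N * (q ^ k - q ^ (k - 1)) := by
    rw [← hS]
    exact dvd_sum fun c _ => hdiv (c : ι → F) c.2
  have hgoal : (univ.filter (fun j => ZRel C j i₀))
      = (univ.filter (fun i => Nz C i)).filter (fun i => ZRel C i i₀) := by
    ext j
    simp only [mem_filter, mem_univ, true_and]
    exact ⟨fun h => ⟨ZRel.nz h h0, h⟩, fun h => h.2⟩
  rw [hgoal, ← hm]
  -- final arithmetic
  rcases Nat.eq_zero_or_pos D with hD0 | hDpos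
  · rw [hD0, zero_mul, add_zero] at hTd
    exact Nat.Coprime.dvd_of_dvd_mul_right (hcop.pow_right _) hTd
  · obtain ⟨i₁, hi₁⟩ := card_pos.mp hDpos
    simp only [mem_filter, mem_univ, true_and] at hi₁
    have hk2 : 2 ≤ k := (hw i₁ hi₁.1 hi₁.2).1
    have hle1 : q ^ (k - 2) ≤ q ^ (k - 1) := Nat.pow_le_pow_right (by omega) (by omega)
    have hle2 : q ^ (k - 1) ≤ q ^ k := Nat.pow_le_pow_right (by omega) (by omega)
    zify [hle1] at hTd
    zify [hle2] at hSd
    have e1 : (q : ℤ) ^ (k - 1) = q ^ (k - 2) * q := by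
      rw [← pow_succ]
      congr 1
      omega
    have e2 : (q : ℤ) ^ k = q ^ (k - 1) * q := by
      rw [← pow_succ]
      congr 1
      omega
    have hcopz : IsCoprime (t : ℤ) (q : ℤ) := by
      rw [Int.isCoprime_iff_gcd_eq_one]
      simpa [Int.gcd_natCast_natCast] using hcop
    have hc1 : IsCoprime (t : ℤ) ((q : ℤ) ^ (k - 1)) := hcopz.pow_right
    have hNd : (t : ℤ) ∣ (N : ℤ) * ((q : ℤ) - 1) := by
      have hrw : (N : ℤ) * ((q : ℤ) ^ k - q ^ (k - 1)) = ((N : ℤ) * (q - 1)) * q ^ (k - 1) := by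
        rw [e2]; ring
      rw [hrw] at hSd
      exact hc1.dvd_of_dvd_mul_right hSd
    have hNE : (N : ℤ) = (m : ℤ) + D := by exact_mod_cast hND.symm
    have hmd : (t : ℤ) ∣ (m : ℤ) * q ^ (k - 2) := by
      have hsub : (m : ℤ) * q ^ (k - 2)
          = ((m : ℤ) * q ^ (k - 1) + D * ((q : ℤ) ^ (k - 1) - q ^ (k - 2)))
            - ((N : ℤ) * (q - 1)) * q ^ (k - 2) := by
        rw [hNE, e1]; ring
      rw [hsub]
      exact dvd_sub hTd (hNd.mul_right _)
    have hfin : (t : ℤ) ∣ (m : ℤ) :=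
      (hcopz.pow_right).dvd_of_dvd_mul_right hmd
    exact_mod_cast hfin

end Core

end Counting

section Constructions
variable {F : Type*} [Field F]

lemma rep_mem {k Δ n t : ℕ} (ht : 0 < t)
    (h : ∃ C : Submodule F (Fin n → F),
      Module.finrank F C = k ∧ IsMinimalCode C ∧ ∀ c ∈ C, Δ ∣ wt c) :
    ∃ C' : Submodule F (Fin (t * n) → F),
      Module.finrank F C' = k ∧ IsMinimalCode C' ∧ ∀ c ∈ C', (t * Δ) ∣ wt c := by
  obtain ⟨C, hrk, hmin, hdiv⟩ := h
  set idx : Fin (t * n) → Fin n := fun j => (finProdFinEquiv.symm j).2 with hidx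
  have hsurj : Surjective idx := by
    intro i
    refine ⟨finProdFinEquiv (⟨0, ht⟩, i), ?_⟩
    show (finProdFinEquiv.symm (finProdFinEquiv (⟨0, ht⟩, i))).2 = i
    rw [Equiv.symm_apply_apply]
  set L : (Fin n → F) →ₗ[F] (Fin (t * n) → F) := LinearMap.funLeft F F idx with hL
  have hLapp : ∀ (x : Fin n → F) (j : Fin (t * n)), L x j = x (idx j) := fun x j => rfl
  have hinj : Injective L := LinearMap.funLeft_injective_of_surjective F F idx hsurj
  have hL0 : ∀ x : Fin n → F, L x = 0 ↔ x = 0 := by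
    intro x
    constructor
    · intro hx
      exact hinj (by rw [hx, map_zero])
    · intro hx; rw [hx, map_zero]
  -- fibers of idx have cardinality t
  have hfib : ∀ i : Fin n, (univ.filter fun j => idx j = i).card = t := by
    intro i
    rw [← Fintype.card_subtype]
    have e1 : {j : Fin (t * n) // idx j = i} ≃ {p : Fin t × Fin n // p.2 = i} :=
      (finProdFinEquiv.symm).subtypeEquiv (fun j => Iff.rfl)
    have e2 : {p : Fin t × Fin n // p.2 = i} ≃ Fin t := by
      refine ⟨fun s => s.1.1, fun x => ⟨(x, i), rfl⟩, ?_, fun x => rfl⟩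
      rintro ⟨⟨a, b⟩, hb⟩
      have hb' : b = i := hb
      subst hb'
      rfl
    rw [Fintype.card_congr (e1.trans e2), Fintype.card_fin]
  -- supports
  have hsupp : ∀ (x y : Fin n → F),
      {j | L x j ≠ 0} ⊆ {j | L y j ≠ 0} ↔ {i | x i ≠ 0} ⊆ {i | y i ≠ 0} := by
    intro x y
    constructor
    · intro hs i hi
      obtain ⟨j, hj⟩ := hsurj i
      have : L x j ≠ 0 := by rw [hLapp, hj]; exact hi
      have := hs this
      rw [Set.mem_setOf_eq, hLapp, hj] at this
      exact this
    · intro hs j hj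
      rw [Set.mem_setOf_eq, hLapp] at hj ⊢
      exact hs hj
  refine ⟨C.map L, ?_, ?_, ?_⟩
  · rw [← hrk]
    exact (LinearEquiv.finrank_eq (C.equivMapOfInjective L hinj)).symm
  · rintro c' hc' hc'0 u' hu' hu'0 hsub
    obtain ⟨c, hcC, rfl⟩ := Submodule.mem_map.mp hc'
    obtain ⟨u, huC, rfl⟩ := Submodule.mem_map.mp hu'
    have hc0 : c ≠ 0 := fun h => hc'0 (by rw [h, map_zero])
    have hu0 : u ≠ 0 := fun h => hu'0 (by rw [h, map_zero])
    have heq := hmin c hcC hc0 u huC hu0 ((hsupp u c).mp hsub)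
    apply Set.Subset.antisymm hsub
    rw [hsupp c u, heq]
  · rintro c' hc'
    obtain ⟨c, hcC, rfl⟩ := Submodule.mem_map.mp hc'
    have hwt : wt (L c) = t * wt c := by
      rw [wt_eq_card, wt_eq_card]
      have hmap : ∀ j ∈ univ.filter (fun j => L c j ≠ 0),
          idx j ∈ univ.filter (fun i => c i ≠ 0) := by
        intro j hj
        simp only [mem_filter, mem_univ, true_and, hLapp] at hj ⊢
        exact hj
      rw [Finset.card_eq_sum_card_fiberwise hmap]
      have : ∀ i ∈ univ.filter (fun i => c i ≠ 0),
          ((univ.filter (fun j => L c j ≠ 0)).filter fun j => idx j = i).card = t := by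
        intro i hi
        simp only [mem_filter, mem_univ, true_and] at hi
        have hset : (univ.filter (fun j => L c j ≠ 0)).filter (fun j => idx j = i)
            = univ.filter (fun j => idx j = i) := by
          ext j
          simp only [filter_filter, mem_filter, mem_univ, true_and, hLapp]
          constructor
          · exact fun h => h.2
          · intro h
            exact ⟨by rw [h]; exact hi, h⟩
        rw [hset, hfib i]
      rw [sum_congr rfl this, sum_const, smul_eq_mul, mul_comm]
    rw [hwt]
    exact mul_dvd_mul_left t (hdiv c hcC)

section Simplex
variable [Fintype F]

lemma simplex_mem [Fintype F] (k : ℕ) :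
    ∃ n : ℕ, ∃ C : Submodule F (Fin n → F),
      Module.finrank F C = k ∧ IsMinimalCode C ∧ ∀ c ∈ C, 1 ∣ wt c := by
  set n := Fintype.card (Fin k → F) with hn
  set e : Fin n ≃ (Fin k → F) := (Fintype.equivFin (Fin k → F)).symm with he
  set ψ : (Fin k → F) → ((Fin k → F) →ₗ[F] F) := fun x =>
    { toFun := fun v => ∑ i, x i * v i
      map_add' := by
        intro v w
        simp only [Pi.add_apply, mul_add]
        rw [Finset.sum_add_distrib]
      map_smul' := by
        intro a v
        simp only [Pi.smul_apply, smul_eq_mul, RingHom.id_apply, Finset.mul_sum]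
        exact Finset.sum_congr rfl fun i _ => by ring } with hψ
  have hψapp : ∀ (x v : Fin k → F), ψ x v = ∑ i, x i * v i := fun x v => rfl
  set G : (Fin k → F) →ₗ[F] (Fin n → F) :=
    { toFun := fun x j => ψ x (e j)
      map_add' := by
        intro x y
        funext j
        simp only [hψapp, Pi.add_apply, add_mul]
        rw [Finset.sum_add_distrib]
      map_smul' := by
        intro a x
        funext j
        simp only [hψapp, Pi.smul_apply, smul_eq_mul, RingHom.id_apply, Finset.mul_sum]
        exact Finset.sum_congr rfl fun i _ => by ring } with hG
  have hGapp : ∀ (x : Fin k → F) (j : Fin n), G x j = ψ x (e j) := fun x j => rfl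
  have hψne : ∀ x : Fin k → F, x ≠ 0 → ψ x ≠ 0 := by
    intro x hx
    obtain ⟨i, hi⟩ := Function.ne_iff.mp hx
    have hi' : x i ≠ 0 := by simpa using hi
    intro h0
    apply hi'
    have hsv := DFunLike.congr_fun h0 (Pi.single (M := fun _ => F) i 1)
    simp only [hψapp, LinearMap.zero_apply] at hsv
    have hsingle : ∑ i', x i' * Pi.single (M := fun _ => F) i 1 i' = x i := by
      simp [Pi.single_apply, mul_ite]
    rw [← hsingle]
    exact hsv
  have hGinj : Injective G := by
    rw [← LinearMap.ker_eq_bot]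
    rw [LinearMap.ker_eq_bot']
    intro x hx
    by_contra hx0
    apply hψne x hx0
    refine LinearMap.ext fun v => ?_
    have hv := congr_fun hx (e.symm v)
    rw [hGapp, Equiv.apply_symm_apply] at hv
    simpa using hv
  -- all nonzero codewords have the same weight
  have hcount : ∀ x : Fin k → F, x ≠ 0 → wt (G x) + Nat.card (LinearMap.ker (ψ x)) = n := by
    intro x hx
    have h1 : wt (G x) = (univ.filter fun v : Fin k → F => ψ x v ≠ 0).card := by
      rw [wt_eq_card]
      rw [← Fintype.card_subtype, ← Fintype.card_subtype]
      exact Fintype.card_congr (e.subtypeEquiv (fun j => Iff.rfl))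
    have h2 : (univ.filter fun v : Fin k → F => ¬ (ψ x v ≠ 0)).card
        = Nat.card (LinearMap.ker (ψ x)) := by
      rw [← Fintype.card_subtype, Nat.card_eq_fintype_card]
      apply Fintype.card_congr
      apply Equiv.subtypeEquivRight
      intro v
      simp [LinearMap.mem_ker]
    have h3 := card_filter_add_card_filter_not
      (s := (univ : Finset (Fin k → F))) (p := fun v => ψ x v ≠ 0)
    rw [card_univ] at h3
    rw [h1, ← h2]
    exact h3
  have hker : ∀ x : Fin k → F, x ≠ 0 →
      Fintype.card F * Nat.card (LinearMap.ker (ψ x)) = n := by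
    intro x hx
    have := card_eq_mul_ker (ψ x) (surj_of_ne_zero _ (hψne x hx))
    rw [Nat.card_eq_fintype_card, Nat.card_eq_fintype_card] at this
    exact this.symm
  have hwt : ∀ x y : Fin k → F, x ≠ 0 → y ≠ 0 → wt (G x) = wt (G y) := by
    intro x y hx hy
    have e1 := hcount x hx
    have e2 := hcount y hy
    have e3 := hker x hx
    have e4 := hker y hy
    have hq : 0 < Fintype.card F := Fintype.card_pos
    have : Nat.card (LinearMap.ker (ψ x)) = Nat.card (LinearMap.ker (ψ y)) :=
      Nat.eq_of_mul_eq_mul_left hq (by rw [e3, e4])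
    omega
  refine ⟨n, LinearMap.range G, ?_, ?_, fun c _ => one_dvd _⟩
  · rw [LinearMap.finrank_range_of_inj hGinj]
    simp [Module.finrank_pi]
  · rintro c' hc' hc'0 u' hu' hu'0 hsub
    obtain ⟨y, rfl⟩ := LinearMap.mem_range.mp hc'
    obtain ⟨x, rfl⟩ := LinearMap.mem_range.mp hu'
    have hy : y ≠ 0 := fun h => hc'0 (by rw [h, map_zero])
    have hx : x ≠ 0 := fun h => hu'0 (by rw [h, map_zero])
    refine Set.eq_of_subset_of_ncard_le hsub ?_ (Set.toFinite _)
    show wt (G y) ≤ wt (G x)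
    rw [hwt x y hx hy]

end Simplex

section Lower
variable {F : Type*} [Field F] [Fintype F]

lemma lower_mem {k t Δ n : ℕ} (ht : 0 < t)
    (hcop : Nat.Coprime t (Fintype.card F))
    (h : ∃ C : Submodule F (Fin n → F),
      Module.finrank F C = k ∧ IsMinimalCode C ∧ ∀ c ∈ C, (t * Δ) ∣ wt c) :
    ∃ n' : ℕ, t * n' ≤ n ∧ ∃ C' : Submodule F (Fin n' → F),
      Module.finrank F C' = k ∧ IsMinimalCode C' ∧ ∀ c ∈ C', Δ ∣ wt c := by
  obtain ⟨C, hrk, hmin, hdiv⟩ := h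
  have hdivt : ∀ c ∈ C, t ∣ wt c := fun c hc => dvd_trans (dvd_mul_right t Δ) (hdiv c hc)
  -- classes
  set cls : Fin n → Finset (Fin n) := fun i => univ.filter (fun j => ZRel C j i) with hcls
  have hmemcls : ∀ i, i ∈ cls i := by
    intro i
    simp [hcls, mem_filter, ZRel.refl]
  have hclseq : ∀ i i', ZRel C i i' → cls i = cls i' := by
    intro i i' hrel
    ext j
    simp only [hcls, mem_filter, mem_univ, true_and]
    exact ⟨fun hj => hj.trans' hrel, fun hj => hj.trans' (hrel.symm')⟩
  have hclsmem : ∀ i j, j ∈ cls i ↔ ZRel C j i := by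
    intro i j
    simp [hcls]
  -- the set of classes of nonzero coordinates
  set P : Finset (Finset (Fin n)) := (univ.filter (fun i => Nz C i)).image cls with hP
  have hPnz : ∀ p ∈ P, ∀ j ∈ p, Nz C j := by
    intro p hp j hj
    obtain ⟨i, hi, rfl⟩ := mem_image.mp hp
    simp only [mem_filter, mem_univ, true_and] at hi
    exact ZRel.nz ((hclsmem i j).mp hj) hi
  have hPrel : ∀ p ∈ P, ∀ j ∈ p, ∀ j' ∈ p, ZRel C j j' := by
    intro p hp j hj j' hj'
    obtain ⟨i, hi, rfl⟩ := mem_image.mp hp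
    exact ((hclsmem i j).mp hj).trans' (((hclsmem i j').mp hj').symm')
  have hPcls : ∀ p ∈ P, ∀ j ∈ p, cls j = p := by
    intro p hp j hj
    obtain ⟨i, hi, rfl⟩ := mem_image.mp hp
    exact hclseq j i ((hclsmem i j).mp hj)
  have hPne : ∀ p ∈ P, p.Nonempty := by
    intro p hp
    obtain ⟨i, hi, rfl⟩ := mem_image.mp hp
    exact ⟨i, hmemcls i⟩
  have hPdvd : ∀ p ∈ P, t ∣ p.card := by
    intro p hp
    obtain ⟨i, hi, rfl⟩ := mem_image.mp hp
    simp only [mem_filter, mem_univ, true_and] at hi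
    exact class_card_dvd C t hcop hdivt i hi
  have hPdisj : ∀ p ∈ P, ∀ p' ∈ P, p ≠ p' → Disjoint p p' := by
    intro p hp p' hp' hne
    rw [Finset.disjoint_left]
    intro j hj hj'
    exact hne ((hPcls p hp j hj).symm.trans (hPcls p' hp' j hj'))
  have hPcover : univ.filter (fun i => Nz C i) = P.biUnion id := by
    ext i
    simp only [mem_biUnion, mem_filter, mem_univ, true_and, id]
    constructor
    · intro hi
      exact ⟨cls i, mem_image.mpr ⟨i, by simp [hi], rfl⟩, hmemcls i⟩
    · rintro ⟨p, hp, hip⟩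
      exact hPnz p hp i hip
  -- choose a (1/t)-fraction of each class
  have hgex : ∀ p : Finset (Fin n), ∃ s ⊆ p, s.card = p.card / t :=
    fun p => Finset.exists_subset_card_eq (s := p) (Nat.div_le_self _ _)
  set g : Finset (Fin n) → Finset (Fin n) := fun p => (hgex p).choose with hg
  have hgsub : ∀ p, g p ⊆ p := fun p => (hgex p).choose_spec.1
  have hgcard : ∀ p, (g p).card = p.card / t := fun p => (hgex p).choose_spec.2
  have hgne : ∀ p ∈ P, (g p).Nonempty := by
    intro p hp
    rw [← Finset.card_pos, hgcard]
    have h1 : t ≤ p.card := Nat.le_of_dvd (Finset.card_pos.mpr (hPne p hp)) (hPdvd p hp)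
    exact Nat.one_le_div_iff ht |>.mpr h1
  set S : Finset (Fin n) := P.biUnion g with hS
  have hgdisj : ∀ p ∈ P, ∀ p' ∈ P, p ≠ p' → Disjoint (g p) (g p') := by
    intro p hp p' hp' hne
    exact Finset.disjoint_of_subset_left (hgsub p)
      (Finset.disjoint_of_subset_right (hgsub p') (hPdisj p hp p' hp' hne))
  have hScard : t * S.card ≤ n := by
    have h1 : S.card = ∑ p ∈ P, (g p).card := Finset.card_biUnion hgdisj
    have h2 : (univ.filter (fun i => Nz C i)).card = ∑ p ∈ P, p.card := by
      rw [hPcover]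
      exact Finset.card_biUnion (by intro p hp p' hp' hne; exact hPdisj p hp p' hp' hne)
    have h3 : t * S.card = ∑ p ∈ P, p.card := by
      rw [h1, Finset.mul_sum]
      refine Finset.sum_congr rfl fun p hp => ?_
      rw [hgcard]
      exact Nat.mul_div_cancel' (hPdvd p hp)
    rw [h3, ← h2]
    calc (univ.filter (fun i => Nz C i)).card ≤ (univ : Finset (Fin n)).card :=
          Finset.card_le_card (Finset.filter_subset _ _)
      _ = n := by simp
  have hSrep : ∀ i, Nz C i → ∃ j ∈ S, ZRel C j i := by
    intro i hi
    have hpP : cls i ∈ P := mem_image.mpr ⟨i, by simp [hi], rfl⟩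
    obtain ⟨j, hj⟩ := hgne (cls i) hpP
    exact ⟨j, Finset.mem_biUnion.mpr ⟨cls i, hpP, hj⟩, (hclsmem i j).mp (hgsub _ hj)⟩
  -- weight halving
  have hW : ∀ c ∈ C, t * (S.filter (fun j => c j ≠ 0)).card
      = (univ.filter (fun i => c i ≠ 0)).card := by
    intro c hc
    have hnz : ∀ i, c i ≠ 0 → Nz C i := fun i hi => ⟨c, hc, hi⟩
    have h2 : univ.filter (fun i => c i ≠ 0)
        = (univ.filter (fun i => Nz C i)).filter (fun i => c i ≠ 0) := by
      ext i
      simp only [mem_filter, mem_univ, true_and]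
      exact ⟨fun h => ⟨hnz i h, h⟩, fun h => h.2⟩
    have hcase : ∀ p ∈ P, (p.filter (fun j => c j ≠ 0)).card
        = t * ((g p).filter (fun j => c j ≠ 0)).card := by
      intro p hp
      by_cases hex : ∃ j ∈ p, c j ≠ 0
      · obtain ⟨j₀, hj₀, hcj₀⟩ := hex
        have hall : ∀ j ∈ p, c j ≠ 0 := by
          intro j hj hj0
          exact hcj₀ ((hPrel p hp j₀ hj₀ j hj c hc).mpr hj0)
        rw [Finset.filter_true_of_mem hall,
          Finset.filter_true_of_mem (fun j hj => hall j (hgsub p hj)), hgcard]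
        exact (Nat.mul_div_cancel' (hPdvd p hp)).symm
      · push_neg at hex
        rw [Finset.filter_false_of_mem (fun j hj hne => hne (hex j hj)),
          Finset.filter_false_of_mem (fun j hj hne => hne (hex j (hgsub p hj)))]
        simp
    have hdisj1 : ∀ p ∈ P, ∀ p' ∈ P, p ≠ p' →
        Disjoint ((g p).filter (fun j => c j ≠ 0)) ((g p').filter (fun j => c j ≠ 0)) := by
      intro p hp p' hp' hne
      exact Finset.disjoint_of_subset_left (Finset.filter_subset _ _)
        (Finset.disjoint_of_subset_right (Finset.filter_subset _ _) (hgdisj p hp p' hp' hne))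
    have hdisj2 : ∀ p ∈ P, ∀ p' ∈ P, p ≠ p' →
        Disjoint ((id p : Finset (Fin n)).filter (fun j => c j ≠ 0))
          ((id p' : Finset (Fin n)).filter (fun j => c j ≠ 0)) := by
      intro p hp p' hp' hne
      exact Finset.disjoint_of_subset_left (Finset.filter_subset _ _)
        (Finset.disjoint_of_subset_right (Finset.filter_subset _ _)
          (hPdisj p hp p' hp' hne))
    have lhsE : S.filter (fun j => c j ≠ 0)
        = P.biUnion (fun p => (g p).filter (fun j => c j ≠ 0)) := by
      show (P.biUnion g).filter (fun j => c j ≠ 0) = _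
      exact Finset.filter_biUnion _ _ _
    calc t * (S.filter (fun j => c j ≠ 0)).card
        = t * ∑ p ∈ P, ((g p).filter (fun j => c j ≠ 0)).card := by
          rw [lhsE, Finset.card_biUnion hdisj1]
      _ = ∑ p ∈ P, (p.filter (fun j => c j ≠ 0)).card := by
          rw [Finset.mul_sum]
          exact (Finset.sum_congr rfl (fun p hp => hcase p hp)).symm
      _ = ((P.biUnion id).filter (fun j => c j ≠ 0)).card := by
          rw [Finset.filter_biUnion]
          exact (Finset.card_biUnion hdisj2).symm
      _ = (univ.filter (fun i => c i ≠ 0)).card := by rw [← hPcover, ← h2]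
  -- the projected code
  set eS : Fin S.card ≃ {x // x ∈ S} := S.equivFin.symm with heS
  set idx : Fin S.card → Fin n := fun j => (eS j : Fin n) with hidx
  have hidxS : ∀ j, idx j ∈ S := fun j => (eS j).2
  have hidxsurj : ∀ j ∈ S, ∃ j', idx j' = j := by
    intro j hj
    exact ⟨eS.symm ⟨j, hj⟩, by simp [hidx, heS]⟩
  set L : (Fin n → F) →ₗ[F] (Fin S.card → F) := LinearMap.funLeft F F idx with hL
  have hLapp : ∀ (x : Fin n → F) (j : Fin S.card), L x j = x (idx j) := fun x j => rfl
  -- injectivity on C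
  have hinjC : ∀ x ∈ C, L x = 0 → x = 0 := by
    intro x hx hLx
    by_contra hx0
    obtain ⟨i, hi⟩ := Function.ne_iff.mp hx0
    have hi' : x i ≠ 0 := by simpa using hi
    obtain ⟨j, hjS, hrel⟩ := hSrep i ⟨x, hx, hi'⟩
    have hxj : x j ≠ 0 := fun h => hi' ((hrel x hx).mp h)
    obtain ⟨j', hj'⟩ := hidxsurj j hjS
    have : L x j' = 0 := by rw [hLx]; rfl
    rw [hLapp, hj'] at this
    exact hxj this
  -- support lifting
  have hlift : ∀ x ∈ C, ∀ y ∈ C,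
      {j | L x j ≠ 0} ⊆ {j | L y j ≠ 0} → {i | x i ≠ 0} ⊆ {i | y i ≠ 0} := by
    intro x hx y hy hs i hi
    have hi' : x i ≠ 0 := hi
    obtain ⟨j, hjS, hrel⟩ := hSrep i ⟨x, hx, hi'⟩
    have hxj : x j ≠ 0 := fun h => hi' ((hrel x hx).mp h)
    obtain ⟨j', hj'⟩ := hidxsurj j hjS
    have h1 : L x j' ≠ 0 := by rw [hLapp, hj']; exact hxj
    have h2 := hs h1
    rw [Set.mem_setOf_eq, hLapp, hj'] at h2
    exact (fun h => h2 ((hrel y hy).mpr h) : y i ≠ 0)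
  refine ⟨S.card, hScard, C.map L, ?_, ?_, ?_⟩
  · rw [← hrk]
    symm
    refine LinearEquiv.finrank_eq (LinearEquiv.ofBijective
      (LinearMap.codRestrict (C.map L) (L.domRestrict C)
        (fun c => Submodule.mem_map_of_mem c.2)) ⟨?_, ?_⟩)
    · intro a b hab
      have : L a.1 = L b.1 := by
        have := congr_arg Subtype.val hab
        exact this
      have hz : L (a.1 - b.1) = 0 := by rw [map_sub, this, sub_self]
      have := hinjC (a.1 - b.1) (sub_mem a.2 b.2) hz
      exact Subtype.ext (by rwa [sub_eq_zero] at this)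
    · rintro ⟨y, hy⟩
      obtain ⟨x, hx, rfl⟩ := Submodule.mem_map.mp hy
      exact ⟨⟨x, hx⟩, rfl⟩
  · rintro c' hc' hc'0 u' hu' hu'0 hsub
    obtain ⟨c, hcC, rfl⟩ := Submodule.mem_map.mp hc'
    obtain ⟨u, huC, rfl⟩ := Submodule.mem_map.mp hu'
    have hc0 : c ≠ 0 := fun h => hc'0 (by rw [h, map_zero])
    have hu0 : u ≠ 0 := fun h => hu'0 (by rw [h, map_zero])
    have heq := hmin c hcC hc0 u huC hu0 (hlift u huC c hcC hsub)
    apply Set.Subset.antisymm hsub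
    intro j hj
    rw [Set.mem_setOf_eq, hLapp] at hj ⊢
    have hmem : idx j ∈ {i | c i ≠ 0} := hj
    rw [← heq] at hmem
    exact hmem
  · rintro c' hc'
    obtain ⟨c, hcC, rfl⟩ := Submodule.mem_map.mp hc'
    have hwt : wt (L c) = (S.filter (fun j => c j ≠ 0)).card := by
      rw [wt_eq_card]
      refine Finset.card_bij (fun j _ => idx j) ?_ ?_ ?_
      · intro j hj
        simp only [mem_filter, mem_univ, true_and, hLapp] at hj
        simp only [mem_filter]
        exact ⟨hidxS j, hj⟩
      · intro a _ b _ hab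
        have : (eS a : Fin n) = (eS b : Fin n) := hab
        exact eS.injective (Subtype.ext this)
      · intro j hj
        simp only [mem_filter] at hj
        obtain ⟨j', hj'⟩ := hidxsurj j hj.1
        refine ⟨j', ?_, hj'⟩
        simp only [mem_filter, mem_univ, true_and, hLapp, hj']
        exact hj.2
    obtain ⟨d, hd⟩ := hdiv c hcC
    rw [wt_eq_card] at hd
    rw [← hW c hcC] at hd
    have : (S.filter (fun j => c j ≠ 0)).card = Δ * d := by
      have := hd
      rw [mul_assoc] at this
      exact Nat.eq_of_mul_eq_mul_left ht this
    rw [hwt, this]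
    exact Dvd.intro d rfl

end Lower

end Constructions

/-- Let `q` be a prime power and `Δ`, `t` positive integers with `gcd(t,q) = 1`.
Then `m(k,q;t·Δ) = t·m(k,q;Δ)`. -/
theorem mDiv_coprime_mul
    (q k t Δ : ℕ) (hq : IsPrimePow q) (ht : 0 < t) (hΔ : 0 < Δ)
    (hcop : Nat.gcd t q = 1)
    (F : Type*) [Field F] [Fintype F] (hF : Fintype.card F = q) :
    mDiv F k (t * Δ) = t * mDiv F k Δ := by
  have hcop' : Nat.Coprime t (Fintype.card F) := by rw [hF]; exact hcop
  have hne : ∀ Δ' : ℕ, 0 < Δ' → Set.Nonempty {n : ℕ | ∃ C : Submodule F (Fin n → F),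
      Module.finrank F C = k ∧ IsMinimalCode C ∧ ∀ c ∈ C, Δ' ∣ wt c} := by
    intro Δ' hΔ'
    obtain ⟨n₀, C₀, h1, h2, h3⟩ := simplex_mem (F := F) k
    obtain ⟨C', hC1, hC2, hC3⟩ := rep_mem hΔ' ⟨C₀, h1, h2, h3⟩
    exact ⟨Δ' * n₀, C', hC1, hC2, fun c hc => by simpa [mul_one] using hC3 c hc⟩
  apply le_antisymm
  · have hmem := Nat.sInf_mem (hne Δ hΔ)
    obtain ⟨C, h1, h2, h3⟩ := hmem
    obtain ⟨C', g1, g2, g3⟩ := rep_mem ht ⟨C, h1, h2, h3⟩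
    exact Nat.sInf_le ⟨C', g1, g2, g3⟩
  · have hmem := Nat.sInf_mem (hne (t * Δ) (by positivity))
    obtain ⟨C, h1, h2, h3⟩ := hmem
    obtain ⟨n', hn', C', g1, g2, g3⟩ := lower_mem ht hcop' ⟨C, h1, h2, h3⟩
    have hle : mDiv F k Δ ≤ n' := Nat.sInf_le ⟨C', g1, g2, g3⟩
    calc t * mDiv F k Δ ≤ t * n' := Nat.mul_le_mul_left t hle
      _ ≤ mDiv F k (t * Δ) := hn'
end

section
/- Let C be a minimal linear [n,k]_2 code. Then the code obtained from C by appending a parity bit to every codeword (i.e., extending each codeword c by the coordinate Σ_i c_i) is a 2-divisible minimal linear [n+1,k]_2 code. Consequently m(k,2;2) ≤ m(k,2;1) + 1. -/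
/-- Extension by a parity bit: the word `c` of length `n` is extended by the extra
coordinate `∑ i, c i`. -/
def parityExt (F : Type*) [CommRing F] (n : ℕ) : (Fin n → F) →ₗ[F] (Fin (n + 1) → F) where
  toFun c := fun j => if h : (j : ℕ) < n then c ⟨j, h⟩ else ∑ i, c i
  map_add' c d := by
    funext j
    by_cases h : (j : ℕ) < n <;> simp [h, Finset.sum_add_distrib]
  map_smul' a c := by
    funext j
    by_cases h : (j : ℕ) < n <;> simp [h, Finset.mul_sum]


lemma zmod2_cases : ∀ x : ZMod 2, x = 0 ∨ x = 1 := by decide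

lemma parityExt_castSucc {F : Type*} [CommRing F] {n : ℕ} (c : Fin n → F) (i : Fin n) :
    parityExt F n c i.castSucc = c i := by
  simp [parityExt]

lemma parityExt_last {F : Type*} [CommRing F] {n : ℕ} (c : Fin n → F) :
    parityExt F n c (Fin.last n) = ∑ i, c i := by
  simp [parityExt]

lemma parityExt_injective {F : Type*} [CommRing F] {n : ℕ} :
    Function.Injective (parityExt F n) := by
  intro c d h
  funext i
  have := congrFun h i.castSucc
  simpa [parityExt_castSucc] using this

lemma natCast_wt {m : ℕ} (c : Fin m → ZMod 2) : (wt c : ZMod 2) = ∑ i, c i := by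
  classical
  have hset : {i | c i ≠ 0} = ↑(Finset.univ.filter (fun i => c i ≠ 0)) := by
    ext i; simp
  rw [wt, hset, Set.ncard_coe_finset]
  rw [← Finset.sum_filter_ne_zero Finset.univ]
  rw [Finset.sum_congr rfl (fun i hi => ((zmod2_cases (c i)).resolve_left (Finset.mem_filter.mp hi).2 : c i = 1))]
  simp

lemma eq_of_supp_eq {ι : Type*} (u c : ι → ZMod 2) (h : {i | u i ≠ 0} = {i | c i ≠ 0}) :
    u = c := by
  funext i
  have h1 := Set.ext_iff.mp h i
  simp only [Set.mem_setOf_eq] at h1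
  rcases zmod2_cases (u i) with h2 | h2 <;> rcases zmod2_cases (c i) with h3 | h3 <;> simp_all

lemma key (n : ℕ) (C : Submodule (ZMod 2) (Fin n → ZMod 2)) (hmin : IsMinimalCode C) :
    Module.finrank (ZMod 2) (C.map (parityExt (ZMod 2) n)) = Module.finrank (ZMod 2) C ∧
    IsMinimalCode (C.map (parityExt (ZMod 2) n)) ∧
    (∀ c ∈ C.map (parityExt (ZMod 2) n), 2 ∣ wt c) := by
  refine ⟨?_, ?_, ?_⟩
  · exact (LinearEquiv.finrank_eq
      (Submodule.equivMapOfInjective (parityExt (ZMod 2) n) parityExt_injective C)).symm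
  · rintro c' hc' hc'0 u' hu' hu'0 hsub
    obtain ⟨c, hc, rfl⟩ := hc'
    obtain ⟨u, hu, rfl⟩ := hu'
    have hc0 : c ≠ 0 := fun h => hc'0 (by rw [h, map_zero])
    have hu0 : u ≠ 0 := fun h => hu'0 (by rw [h, map_zero])
    have hsub' : {i | u i ≠ 0} ⊆ {i | c i ≠ 0} := by
      intro i hi
      have h1 : parityExt (ZMod 2) n u i.castSucc ≠ 0 := by
        rw [parityExt_castSucc]; exact hi
      have h2 := hsub h1
      rwa [Set.mem_setOf_eq, parityExt_castSucc] at h2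
    have heq := hmin c hc hc0 u hu hu0 hsub'
    rw [eq_of_supp_eq u c heq]
  · rintro c' ⟨c, hc, rfl⟩
    have h1 : ((wt (parityExt (ZMod 2) n c) : ℕ) : ZMod 2) = 0 := by
      rw [natCast_wt, Fin.sum_univ_castSucc]
      simp only [parityExt_castSucc, parityExt_last]
      exact CharTwo.add_self_eq_zero _
    exact (ZMod.natCast_eq_zero_iff _ 2).mp h1

/-- Let `C` be a minimal linear `[n,k]_2` code. Then the code obtained from `C` by appending
a parity bit to every codeword is a `2`-divisible minimal linear `[n+1,k]_2` code.
Consequently `m(k,2;2) ≤ m(k,2;1) + 1`. -/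
theorem parity_extension_of_minimal_code
    (n k : ℕ) (C : Submodule (ZMod 2) (Fin n → ZMod 2))
    (hk : Module.finrank (ZMod 2) C = k) (hmin : IsMinimalCode C) :
    Module.finrank (ZMod 2) (C.map (parityExt (ZMod 2) n)) = k ∧
    IsMinimalCode (C.map (parityExt (ZMod 2) n)) ∧
    (∀ c ∈ C.map (parityExt (ZMod 2) n), 2 ∣ wt c) ∧
    mDiv (ZMod 2) k 2 ≤ mDiv (ZMod 2) k 1 + 1 := by
  obtain ⟨h1, h2, h3⟩ := key n C hmin
  refine ⟨hk ▸ h1, h2, h3, ?_⟩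
  set S1 := {m : ℕ | ∃ C' : Submodule (ZMod 2) (Fin m → ZMod 2),
    Module.finrank (ZMod 2) C' = k ∧ IsMinimalCode C' ∧ ∀ c ∈ C', 1 ∣ wt c} with hS1
  have hne : n ∈ S1 := ⟨C, hk, hmin, fun c _ => one_dvd _⟩
  have hmem := Nat.sInf_mem ⟨n, hne⟩
  obtain ⟨C', hk', hmin', -⟩ := hmem
  obtain ⟨g1, g2, g3⟩ := key _ C' hmin'
  exact Nat.sInf_le ⟨C'.map (parityExt (ZMod 2) _), g1.trans hk', g2, g3⟩
end

section
/- Let q be a prime power and k ≥ 1 and r ≥ k-1 integers. Then m(k,q;q^r) = q^{r-k+1}·(q^k-1)/(q-1), i.e., the minimum possible length of a q^r-divisible minimal k-dimensional linear code over F_q is q^{r-k+1}·(q^k-1)/(q-1), attained by the q^{r-k+1}-fold repetition of the k-dimensional simplex code. -/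
open Module

lemma wt_eq_sum {n : ℕ} {F : Type*} [Zero F] [DecidableEq F] (c : Fin n → F) :
    wt c = ∑ i, if c i ≠ 0 then 1 else 0 := by
  rw [wt, Set.ncard_eq_toFinset_card']
  simp [Set.toFinset_setOf, Finset.card_filter]

lemma wt_pos {n : ℕ} {F : Type*} [Zero F] {c : Fin n → F} (hc : c ≠ 0) : 0 < wt c := by
  obtain ⟨i, hi⟩ : ∃ i, c i ≠ 0 := by
    by_contra h; push_neg at h; exact hc (funext h)
  exact Set.ncard_pos (Set.toFinite _) |>.mpr ⟨i, hi⟩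

lemma lower_bound {F : Type*} [Field F] [Fintype F] {q k r n : ℕ}
    (hF : Fintype.card F = q) (hq2 : 2 ≤ q) (hk : 1 ≤ k) (hkr : k ≤ r + 1)
    (C : Submodule F (Fin n → F)) (h1 : Module.finrank F C = k)
    (h3 : ∀ c ∈ C, q ^ r ∣ wt c) :
    q ^ (r + 1 - k) * ((q ^ k - 1) / (q - 1)) ≤ n := by
  classical
  haveI : Fintype C := Fintype.ofFinite C
  have hcard : Fintype.card C = q ^ k := by
    rw [← hF, ← h1]; exact card_eq_pow_finrank
  -- the total weight sum
  set T : ℕ := ∑ c : C, wt (c : Fin n → F) with hT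
  -- upper bound on T
  have hup : T ≤ n * (q ^ k - q ^ (k - 1)) := by
    have hswap : T = ∑ i : Fin n, (Finset.univ.filter fun c : C => (c : Fin n → F) i ≠ 0).card := by
      rw [hT]
      simp_rw [wt_eq_sum, Finset.card_filter]
      rw [Finset.sum_comm]
    rw [hswap]
    have hbound : ∀ i : Fin n,
        (Finset.univ.filter fun c : C => (c : Fin n → F) i ≠ 0).card ≤ q ^ k - q ^ (k - 1) := by
      intro i
      set f : C →ₗ[F] F := (LinearMap.proj i).comp C.subtype with hf
      haveI : Fintype (LinearMap.ker f) := Fintype.ofFinite _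
      have hker : Fintype.card (LinearMap.ker f) = q ^ finrank F (LinearMap.ker f) := by
        rw [← hF]; exact Module.card_eq_pow_finrank (K := F) (V := LinearMap.ker f)
      have hrk : k - 1 ≤ finrank F (LinearMap.ker f) := by
        have := LinearMap.finrank_range_add_finrank_ker f
        have h2 : finrank F (LinearMap.range f) ≤ 1 := by
          simpa using Submodule.finrank_le (LinearMap.range f)
        omega
      have hkerge : q ^ (k - 1) ≤ Fintype.card (LinearMap.ker f) := by
        rw [hker]; exact Nat.pow_le_pow_right (by omega) hrk
      have e1 : (Finset.univ.filter fun c : C => (c : Fin n → F) i ≠ 0).card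
          = Fintype.card {c : C // (c : Fin n → F) i ≠ 0} := (Fintype.card_subtype _).symm
      have e3 : Fintype.card {c : C // (c : Fin n → F) i ≠ 0}
          = Fintype.card C - Fintype.card {c : C // (c : Fin n → F) i = 0} := by
        rw [← Fintype.card_subtype_compl]
      have e4 : Fintype.card {c : C // (c : Fin n → F) i = 0}
          = Fintype.card (LinearMap.ker f) := by
        exact Fintype.card_congr (Equiv.subtypeEquivRight (by
          intro c; simp [LinearMap.mem_ker, hf]))
      rw [e1, e3, e4, hcard]
      omega
    calc ∑ i : Fin n, (Finset.univ.filter fun c : C => (c : Fin n → F) i ≠ 0).card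
        ≤ ∑ _i : Fin n, (q ^ k - q ^ (k - 1)) := Finset.sum_le_sum fun i _ => hbound i
      _ = n * (q ^ k - q ^ (k - 1)) := by simp [Finset.sum_const, Finset.card_univ]
  -- lower bound on T
  have hlow : (q ^ k - 1) * q ^ r ≤ T := by
    have hsub : (Finset.univ.filter fun c : C => c ≠ 0).card = q ^ k - 1 := by
      have e1 : (Finset.univ.filter fun c : C => c ≠ 0).card
          = Fintype.card {c : C // c ≠ 0} := (Fintype.card_subtype _).symm
      have e3 : Fintype.card {c : C // c ≠ 0}
          = Fintype.card C - Fintype.card {c : C // c = 0} := by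
        rw [← Fintype.card_subtype_compl]
      have e4 : Fintype.card {c : C // c = 0} = 1 := Fintype.card_subtype_eq 0
      rw [e1, e3, e4, hcard]
    calc (q ^ k - 1) * q ^ r
        = ∑ _c ∈ (Finset.univ.filter fun c : C => c ≠ 0), q ^ r := by
          rw [Finset.sum_const, hsub, smul_eq_mul]
      _ ≤ ∑ c ∈ (Finset.univ.filter fun c : C => c ≠ 0), wt (c : Fin n → F) := by
          apply Finset.sum_le_sum
          intro c hc
          simp only [Finset.mem_filter] at hc
          have hc0 : (c : Fin n → F) ≠ 0 := by
            intro h; exact hc.2 (Subtype.ext h)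
          exact Nat.le_of_dvd (wt_pos hc0) (h3 c c.2)
      _ ≤ T := Finset.sum_le_sum_of_subset (Finset.filter_subset _ _)
  -- arithmetic
  have hdvd : (q - 1) ∣ q ^ k - 1 := by
    simpa using Nat.sub_dvd_pow_sub_pow q 1 k
  have hqk : q ^ k - q ^ (k - 1) = q ^ (k - 1) * (q - 1) := by
    have : q ^ k = q ^ (k - 1) * q := by
      rw [← pow_succ]; congr 1; omega
    rw [this, Nat.mul_sub, mul_one]
  have hNeq : q ^ (r + 1 - k) * ((q ^ k - 1) / (q - 1)) * (q ^ (k - 1) * (q - 1))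
      = q ^ r * (q ^ k - 1) := by
    have h1' : q ^ (r + 1 - k) * q ^ (k - 1) = q ^ r := by
      rw [← pow_add]; congr 1; omega
    calc q ^ (r + 1 - k) * ((q ^ k - 1) / (q - 1)) * (q ^ (k - 1) * (q - 1))
        = (q ^ (r + 1 - k) * q ^ (k - 1)) * ((q ^ k - 1) / (q - 1) * (q - 1)) := by ring
      _ = q ^ r * (q ^ k - 1) := by rw [h1', Nat.div_mul_cancel hdvd]
  have hfin : q ^ (r + 1 - k) * ((q ^ k - 1) / (q - 1)) * (q ^ (k - 1) * (q - 1))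
      ≤ n * (q ^ (k - 1) * (q - 1)) := by
    rw [hNeq, ← hqk]
    calc q ^ r * (q ^ k - 1) = (q ^ k - 1) * q ^ r := by ring
      _ ≤ T := hlow
      _ ≤ n * (q ^ k - q ^ (k - 1)) := hup
  have hpos : 0 < q ^ (k - 1) * (q - 1) := by
    have : 0 < q ^ (k - 1) := Nat.pow_pos (by omega)
    exact Nat.mul_pos this (by omega)
  exact Nat.le_of_mul_le_mul_right hfin hpos

lemma minimal_of_const_wt {ι F : Type*} [Finite ι] [Semiring F] {w : ℕ}
    (C : Submodule F (ι → F)) (h : ∀ c ∈ C, c ≠ 0 → wt c = w) : IsMinimalCode C := by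
  intro c hc hc0 u hu hu0 hsub
  refine Set.eq_of_subset_of_ncard_le hsub ?_ (Set.toFinite _)
  have h1 := h c hc hc0
  have h2 := h u hu hu0
  rw [wt] at h1 h2
  omega

section Simplex
variable {F : Type*} [Field F] [Fintype F]

/-- The dot-product functional. -/
noncomputable def dotF (k : ℕ) (x : Fin k → F) : (Fin k → F) →ₗ[F] F where
  toFun v := ∑ i, x i * v i
  map_add' v w := by simp [mul_add, Finset.sum_add_distrib]
  map_smul' t v := by
    simp only [Pi.smul_apply, smul_eq_mul, RingHom.id_apply, Finset.mul_sum]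
    exact Finset.sum_congr rfl fun i _ => by ring

/-- The generator map of the `M`-fold repeated simplex code. -/
noncomputable def simplexMap (k M : ℕ) :
    (Fin k → F) →ₗ[F] ((Fin M × Projectivization F (Fin k → F)) → F) where
  toFun x := fun z => dotF k x z.2.rep
  map_add' x y := by
    funext z
    simp [dotF, add_mul, Finset.sum_add_distrib]
  map_smul' t x := by
    funext z
    simp only [dotF, LinearMap.coe_mk, AddHom.coe_mk, RingHom.id_apply, Pi.smul_apply,
      smul_eq_mul, Finset.mul_sum]
    exact Finset.sum_congr rfl fun i _ => by ring

lemma dotF_single {k : ℕ} (x : Fin k → F) (j : Fin k) :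
    dotF k x (Pi.single j 1) = x j := by
  simp [dotF, Pi.single_apply, mul_ite, Finset.sum_ite_eq']

lemma dotF_ne_zero {k : ℕ} {x : Fin k → F} (hx : x ≠ 0) : dotF k x ≠ 0 := by
  obtain ⟨j, hj⟩ : ∃ j, x j ≠ 0 := by
    by_contra h; push_neg at h; exact hx (funext h)
  intro h
  apply hj
  have := congrArg (fun f => f (Pi.single j (1:F))) (h : dotF k x = 0)
  simpa [dotF_single] using this

lemma simplexMap_injective (k M : ℕ) (hM : 0 < M) :
    Function.Injective (simplexMap (F := F) k M) := by
  rw [injective_iff_map_eq_zero]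
  intro x h
  funext j
  set v : Fin k → F := Pi.single j 1 with hv
  have hv0 : v ≠ 0 := by
    intro h0
    have := congrFun h0 j
    simp [hv] at this
  obtain ⟨a, ha⟩ := Projectivization.exists_smul_eq_mk_rep F v hv0
  have hz := congrFun h (⟨0, hM⟩, Projectivization.mk F v hv0)
  simp only [simplexMap, LinearMap.coe_mk, AddHom.coe_mk, Pi.zero_apply] at hz
  rw [← ha, Units.smul_def, map_smul] at hz
  have hz' : dotF k x v = 0 := by
    have ha0 : (a : F) ≠ 0 := a.ne_zero
    simpa [smul_eq_mul, ha0] using hz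
  rw [dotF_single] at hz'
  simpa using hz'

/-- Key counting: for `x ≠ 0`, the number of projective points off the hyperplane. -/
lemma card_proj_ne_zero {k : ℕ} {x : Fin k → F} (hx : x ≠ 0) :
    Nat.card {p : Projectivization F (Fin k → F) // dotF k x p.rep ≠ 0}
      = Fintype.card F ^ (k - 1) := by
  classical
  set q := Fintype.card F with hq
  set g := dotF k x with hg
  have hcardV : Fintype.card (Fin k → F) = q ^ k := by simp [hq]
  haveI : Fintype (LinearMap.ker g) := Fintype.ofFinite _
  have hrange : finrank F (LinearMap.range g) = 1 := by
    have hle : finrank F (LinearMap.range g) ≤ 1 := by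
      simpa using Submodule.finrank_le (LinearMap.range g)
    have hne : LinearMap.range g ≠ ⊥ := fun hbot =>
      dotF_ne_zero hx (LinearMap.range_eq_bot.1 hbot)
    have h0 : finrank F (LinearMap.range g) ≠ 0 := fun h0 =>
      hne (Submodule.finrank_eq_zero.1 h0)
    omega
  have hkerrk : finrank F (LinearMap.ker g) = k - 1 := by
    have := LinearMap.finrank_range_add_finrank_ker g
    rw [hrange, finrank_fin_fun] at this
    omega
  have hkercard : Fintype.card (LinearMap.ker g) = q ^ (k - 1) := by
    rw [hq, ← hkerrk]; exact card_eq_pow_finrank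
  have hA : Fintype.card {v : Fin k → F // g v ≠ 0} = q ^ k - q ^ (k - 1) := by
    have e3 : Fintype.card {v : Fin k → F // g v ≠ 0}
        = Fintype.card (Fin k → F) - Fintype.card {v : Fin k → F // g v = 0} := by
      rw [← Fintype.card_subtype_compl]
    have e4 : Fintype.card {v : Fin k → F // g v = 0}
        = Fintype.card (LinearMap.ker g) :=
      Fintype.card_congr (Equiv.subtypeEquivRight (by
        intro v; simp [LinearMap.mem_ker]))
    rw [e3, e4, hkercard, hcardV]
  haveI : Finite (Projectivization F (Fin k → F)) := Quotient.finite _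
  haveI : Fintype {p : Projectivization F (Fin k → F) // g p.rep ≠ 0} := Fintype.ofFinite _
  have hfib : Fˣ × {p : Projectivization F (Fin k → F) // g p.rep ≠ 0}
      ≃ {v : Fin k → F // g v ≠ 0} := by
    refine Equiv.ofBijective (fun up => ⟨(up.1 : F) • up.2.1.rep, ?_⟩) ⟨?_, ?_⟩
    · rw [map_smul]
      simp only [smul_eq_mul, ne_eq, mul_eq_zero, not_or]
      exact ⟨up.1.ne_zero, up.2.2⟩
    · rintro ⟨u, p, hp⟩ ⟨u', p', hp'⟩ h
      simp only [Subtype.mk_eq_mk] at h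
      have hrep : p.rep ≠ 0 := p.rep_nonzero
      have hrep' : p'.rep ≠ 0 := p'.rep_nonzero
      have hpp' : p = p' := by
        conv_lhs => rw [← p.mk_rep]
        conv_rhs => rw [← p'.mk_rep]
        rw [Projectivization.mk_eq_mk_iff]
        refine ⟨u⁻¹ * u', ?_⟩
        rw [Units.smul_def, Units.val_mul, mul_smul, ← h, ← mul_smul,
          Units.val_inv_eq_inv_val, inv_mul_cancel₀ u.ne_zero, one_smul]
      subst hpp'
      have hu : (u : F) = (u' : F) := by
        have h3 : ((u : F) - (u' : F)) • p.rep = 0 := by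
          rw [sub_smul, h, sub_self]
        rcases smul_eq_zero.1 h3 with h4 | h4
        · exact sub_eq_zero.1 h4
        · exact absurd h4 hrep
      simp [Prod.ext_iff, Units.ext_iff, hu]
    · rintro ⟨v, hv⟩
      have hv0 : v ≠ 0 := by
        intro h0; rw [h0] at hv; exact hv (map_zero g)
      obtain ⟨a, ha⟩ := Projectivization.exists_smul_eq_mk_rep F v hv0
      refine ⟨⟨a⁻¹, ⟨Projectivization.mk F v hv0, ?_⟩⟩, ?_⟩
      · rw [← ha, Units.smul_def, map_smul]
        simp only [smul_eq_mul, ne_eq, mul_eq_zero, not_or]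
        exact ⟨a.ne_zero, hv⟩
      · simp only [Subtype.mk_eq_mk]
        rw [← ha, Units.smul_def, Units.val_inv_eq_inv_val, smul_smul,
          inv_mul_cancel₀ a.ne_zero, one_smul]
  have hcardu : Fintype.card Fˣ = q - 1 := by
    rw [hq]
    have e1 : Fintype.card Fˣ = Fintype.card {v : F // v ≠ 0} :=
      Fintype.card_congr unitsEquivNeZero
    have e3 : Fintype.card {v : F // v ≠ 0}
        = Fintype.card F - Fintype.card {v : F // v = 0} := by
      rw [← Fintype.card_subtype_compl]
    have e4 : Fintype.card {v : F // v = 0} = 1 := Fintype.card_subtype_eq 0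
    rw [e1, e3, e4]
  have hcount := Fintype.card_congr hfib
  rw [Fintype.card_prod, hcardu, hA] at hcount
  have hq2 : 2 ≤ q := by rw [hq]; exact Fintype.one_lt_card
  have hfact : q ^ k - q ^ (k - 1) = q ^ (k - 1) * (q - 1) := by
    have hk : 1 ≤ k := by
      obtain ⟨j, _⟩ : ∃ j, x j ≠ 0 := by
        by_contra h; push_neg at h; exact hx (funext h)
      exact Nat.one_le_iff_ne_zero.2 (by rintro rfl; exact j.elim0)
    have hpow : q ^ k = q ^ (k - 1) * q := by rw [← pow_succ]; congr 1; omega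
    rw [hpow, Nat.mul_sub, mul_one]
  rw [hfact] at hcount
  rw [Nat.card_eq_fintype_card]
  have hpos : 0 < q - 1 := by omega
  exact Nat.eq_of_mul_eq_mul_left hpos (hcount.trans (mul_comm _ _))
end Simplex

section Pieces
variable {F : Type*} [Field F] [Fintype F]

lemma wt_zero {ι : Type*} : wt (0 : ι → F) = 0 := by
  simp [wt]

lemma wt_simplexMap {k M : ℕ} {x : Fin k → F} (hx : x ≠ 0) :
    wt (simplexMap (F := F) k M x) = M * Fintype.card F ^ (k - 1) := by
  classical
  rw [wt, ← Nat.card_coe_set_eq]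
  have e : {z : Fin M × Projectivization F (Fin k → F) | simplexMap k M x z ≠ 0}
      ≃ Fin M × {p : Projectivization F (Fin k → F) // dotF k x p.rep ≠ 0} :=
    { toFun := fun z => (z.1.1, ⟨z.1.2, z.2⟩)
      invFun := fun w => ⟨(w.1, w.2.1), w.2.2⟩
      left_inv := fun _ => rfl
      right_inv := fun _ => rfl }
  rw [Nat.card_congr e, Nat.card_prod, Nat.card_eq_fintype_card, Fintype.card_fin,
    card_proj_ne_zero hx]

lemma card_proj_total (k : ℕ) :
    (Fintype.card F - 1) * Nat.card (Projectivization F (Fin k → F))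
      = Fintype.card F ^ k - 1 := by
  classical
  haveI : Finite (Projectivization F (Fin k → F)) := Quotient.finite _
  haveI : Fintype (Projectivization F (Fin k → F)) := Fintype.ofFinite _
  have hfib : Fˣ × Projectivization F (Fin k → F) ≃ {v : Fin k → F // v ≠ 0} := by
    refine Equiv.ofBijective (fun up => ⟨(up.1 : F) • up.2.rep, by
      simp [smul_ne_zero_iff, up.1.ne_zero, up.2.rep_nonzero]⟩) ⟨?_, ?_⟩
    · rintro ⟨u, p⟩ ⟨u', p'⟩ h
      simp only [Subtype.mk_eq_mk] at h
      have hrep : p.rep ≠ 0 := p.rep_nonzero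
      have hrep' : p'.rep ≠ 0 := p'.rep_nonzero
      have hpp' : p = p' := by
        conv_lhs => rw [← p.mk_rep]
        conv_rhs => rw [← p'.mk_rep]
        rw [Projectivization.mk_eq_mk_iff]
        refine ⟨u⁻¹ * u', ?_⟩
        rw [Units.smul_def, Units.val_mul, mul_smul, ← h, ← mul_smul,
          Units.val_inv_eq_inv_val, inv_mul_cancel₀ u.ne_zero, one_smul]
      subst hpp'
      have hu : (u : F) = (u' : F) := by
        have h3 : ((u : F) - (u' : F)) • p.rep = 0 := by
          rw [sub_smul, h, sub_self]
        rcases smul_eq_zero.1 h3 with h4 | h4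
        · exact sub_eq_zero.1 h4
        · exact absurd h4 hrep
      simp [Prod.ext_iff, Units.ext_iff, hu]
    · rintro ⟨v, hv0⟩
      obtain ⟨a, ha⟩ := Projectivization.exists_smul_eq_mk_rep F v hv0
      refine ⟨⟨a⁻¹, Projectivization.mk F v hv0⟩, ?_⟩
      simp only [Subtype.mk_eq_mk]
      rw [← ha, Units.smul_def, Units.val_inv_eq_inv_val, smul_smul,
        inv_mul_cancel₀ a.ne_zero, one_smul]
  have hcardu : Fintype.card Fˣ = Fintype.card F - 1 := by
    have e1 : Fintype.card Fˣ = Fintype.card {v : F // v ≠ 0} :=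
      Fintype.card_congr unitsEquivNeZero
    have e3 : Fintype.card {v : F // v ≠ 0}
        = Fintype.card F - Fintype.card {v : F // v = 0} := by
      rw [← Fintype.card_subtype_compl]
    have e4 : Fintype.card {v : F // v = 0} = 1 := Fintype.card_subtype_eq 0
    rw [e1, e3, e4]
  have hV : Fintype.card {v : Fin k → F // v ≠ 0} = Fintype.card F ^ k - 1 := by
    have e3 : Fintype.card {v : Fin k → F // v ≠ 0}
        = Fintype.card (Fin k → F) - Fintype.card {v : Fin k → F // v = 0} := by
      rw [← Fintype.card_subtype_compl]
    have e4 : Fintype.card {v : Fin k → F // v = 0} = 1 := Fintype.card_subtype_eq 0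
    rw [e3, e4]
    simp
  have := Fintype.card_congr hfib
  rw [Fintype.card_prod, hcardu, hV] at this
  rw [Nat.card_eq_fintype_card]
  exact this

lemma wt_funCongrLeft {ι κ : Type*} (e : κ ≃ ι) (c : ι → F) :
    wt ((LinearEquiv.funCongrLeft F F e) c) = wt c := by
  have hs : {i : κ | (LinearEquiv.funCongrLeft F F e) c i ≠ 0} = e ⁻¹' {j | c j ≠ 0} := by
    ext i
    simp [LinearEquiv.funCongrLeft_apply, LinearMap.funLeft_apply]
  rw [wt, wt, hs]
  have him : e ⁻¹' {j | c j ≠ 0} = e.symm '' {j | c j ≠ 0} := by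
    rw [Equiv.image_eq_preimage_symm]
    simp
  rw [him, Set.ncard_image_of_injective _ e.symm.injective]
end Pieces

/-- Let `q` be a prime power and `k ≥ 1`, `r ≥ k-1` integers. Then
`m(k,q;q^r) = q^(r-k+1)·(q^k-1)/(q-1)`, attained by the `q^(r-k+1)`-fold repetition
of the `k`-dimensional simplex code. -/
theorem mDiv_high_power
    (q k r : ℕ) (hq : IsPrimePow q) (hk : 1 ≤ k) (hr : k - 1 ≤ r)
    (F : Type*) [Field F] [Fintype F] (hF : Fintype.card F = q) :
    mDiv F k (q ^ r) = q ^ (r + 1 - k) * ((q ^ k - 1) / (q - 1)) ∧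
    ∃ C : Submodule F (Fin (q ^ (r + 1 - k) * ((q ^ k - 1) / (q - 1))) → F),
      Module.finrank F C = k ∧ IsMinimalCode C ∧ ∀ c ∈ C, q ^ r ∣ wt c := by
  classical
  subst hF
  have hq2 : 2 ≤ Fintype.card F := Fintype.one_lt_card
  have hk1 : k ≤ r + 1 := by omega
  set q := Fintype.card F with hqdef
  set M := q ^ (r + 1 - k) with hM
  set N := M * ((q ^ k - 1) / (q - 1)) with hN
  haveI : Finite (Projectivization F (Fin k → F)) := Quotient.finite _
  haveI : Fintype (Projectivization F (Fin k → F)) := Fintype.ofFinite _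
  have hMpos : 0 < M := Nat.pow_pos (by omega)
  have hPcard : Fintype.card (Projectivization F (Fin k → F)) = (q ^ k - 1) / (q - 1) := by
    have h := card_proj_total (F := F) k
    rw [Nat.card_eq_fintype_card] at h
    symm
    apply Nat.div_eq_of_eq_mul_left (by omega : 0 < q - 1)
    rw [← h, mul_comm]
  have ecard : Fintype.card (Fin N) = Fintype.card (Fin M × Projectivization F (Fin k → F)) := by
    rw [Fintype.card_fin, Fintype.card_prod, Fintype.card_fin, hPcard]
  let e : Fin N ≃ (Fin M × Projectivization F (Fin k → F)) := Fintype.equivOfCardEq ecard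
  let L := LinearEquiv.funCongrLeft F F e
  let C0 := LinearMap.range (simplexMap (F := F) k M)
  let C' := C0.map (L : ((Fin M × Projectivization F (Fin k → F)) → F) →ₗ[F] (Fin N → F))
  have hrank : Module.finrank F C' = k := by
    have h1 : Module.finrank F C' = Module.finrank F C0 := LinearEquiv.finrank_map_eq L C0
    rw [h1, LinearMap.finrank_range_of_inj (simplexMap_injective k M hMpos)]
    exact Module.finrank_fin_fun F
  have hconst : ∀ c ∈ C', c ≠ 0 → wt c = M * q ^ (k - 1) := by
    intro c hc hc0
    obtain ⟨c0, hc0mem, rfl⟩ := Submodule.mem_map.1 hc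
    obtain ⟨x, rfl⟩ := LinearMap.mem_range.1 hc0mem
    have hx : x ≠ 0 := by
      rintro rfl
      simp [map_zero] at hc0
    rw [LinearEquiv.coe_coe]
    rw [wt_funCongrLeft, wt_simplexMap hx]
  have hdvd : ∀ c ∈ C', q ^ r ∣ wt c := by
    intro c hc
    by_cases h0 : c = 0
    · subst h0; rw [wt_zero]; exact dvd_zero _
    · rw [hconst c hc h0]
      have hMq : M * q ^ (k - 1) = q ^ r := by
        rw [hM, ← pow_add]; congr 1; omega
      rw [hMq]
  have hmin : IsMinimalCode C' := minimal_of_const_wt C' hconst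
  have hmem : N ∈ {n : ℕ | ∃ C : Submodule F (Fin n → F),
      Module.finrank F C = k ∧ IsMinimalCode C ∧ ∀ c ∈ C, q ^ r ∣ wt c} :=
    ⟨C', hrank, hmin, hdvd⟩
  constructor
  · rw [mDiv]
    refine le_antisymm (Nat.sInf_le hmem) ?_
    refine le_csInf ⟨N, hmem⟩ ?_
    rintro n ⟨C, h1, _, h3⟩
    exact lower_bound hqdef.symm hq2 hk hk1 C h1 h3
  · exact ⟨C', hrank, hmin, hdvd⟩
end

section
/- For every integer t ≥ 2 we have m(2t,2;2^{t-1}) ≤ 3·(2^t - 1): the binary linear code of length 3·(2^t - 1) and dimension 2t whose associated point set is the union of three pairwise disjoint t-dimensional subspaces of PG(2t-1,2) is a minimal two-weight code whose nonzero weights are 2·2^{t-1} and 3·2^{t-1}; in particular it is 2^{t-1}-divisible. -/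
section Aux
variable {M : Type*} [AddCommGroup M] [Module (ZMod 2) M] [Finite M]

lemma aux_card_submodule (S : Submodule (ZMod 2) M) :
    (S : Set M).ncard = 2 ^ (Module.finrank (ZMod 2) S) := by
  have : Fintype M := Fintype.ofFinite M
  have : Fintype S := Fintype.ofFinite S
  rw [← Nat.card_coe_set_eq]
  have h : Nat.card S = 2 ^ (Module.finrank (ZMod 2) S) := by
    rw [Nat.card_eq_fintype_card, Module.card_eq_pow_finrank (K := ZMod 2), ZMod.card]
  exact h

lemma aux_half (S : Submodule (ZMod 2) M) (f : M →ₗ[ZMod 2] ZMod 2)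
    (s₀ : M) (hs₀ : s₀ ∈ S) (hfs₀ : f s₀ ≠ 0) :
    2 * Set.ncard {v | v ∈ S ∧ f v ≠ 0} = (S : Set M).ncard := by
  have hzm : ∀ a : ZMod 2, a = 0 ∨ a = 1 := by decide
  have h11 : (1 : ZMod 2) + 1 = 0 := by decide
  have hss : s₀ + s₀ = 0 := by
    have h : s₀ + s₀ = ((1 : ZMod 2) + 1) • s₀ := by rw [add_smul, one_smul]
    rw [h, h11, zero_smul]
  have himg : (fun v => v + s₀) '' {v | v ∈ S ∧ f v = 0} = {v | v ∈ S ∧ f v ≠ 0} := by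
    ext w
    constructor
    · rintro ⟨v, ⟨hvS, hv0⟩, rfl⟩
      refine ⟨S.add_mem hvS hs₀, ?_⟩
      rw [map_add, hv0, zero_add]; exact hfs₀
    · rintro ⟨hwS, hw⟩
      refine ⟨w + s₀, ⟨S.add_mem hwS hs₀, ?_⟩, ?_⟩
      · rw [map_add]
        rcases hzm (f w) with h | h
        · exact absurd h hw
        · rcases hzm (f s₀) with h' | h'
          · exact absurd h' hfs₀
          · rw [h, h', h11]
      · show w + s₀ + s₀ = w
        rw [add_assoc, hss, add_zero]
  have hinj : Function.Injective (fun v : M => v + s₀) := add_left_injective s₀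
  have hcardeq : {v | v ∈ S ∧ f v = 0}.ncard = {v | v ∈ S ∧ f v ≠ 0}.ncard := by
    rw [← himg, Set.ncard_image_of_injective _ hinj]
  have hsplit : (S : Set M) = {v | v ∈ S ∧ f v = 0} ∪ {v | v ∈ S ∧ f v ≠ 0} := by
    ext v; by_cases h : f v = 0 <;> simp [h]
  have hdisj : Disjoint {v | v ∈ S ∧ f v = 0} {v | v ∈ S ∧ f v ≠ 0} := by
    rw [Set.disjoint_left]; rintro v ⟨_, h0⟩ ⟨_, h1⟩; exact h1 h0
  rw [hsplit, Set.ncard_union_eq hdisj (Set.toFinite _) (Set.toFinite _), ← hcardeq]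
  ring

end Aux

lemma wt_def {ι F : Type*} [Zero F] (c : ι → F) : wt c = Set.ncard {i | c i ≠ 0} := rfl

set_option maxHeartbeats 1000000 in
/-- For every integer `t ≥ 2` we have `m(2t,2;2^(t-1)) ≤ 3·(2^t - 1)`: given three
pairwise disjoint `t`-dimensional subspaces of `PG(2t-1,2)`, the binary code of length
`3·(2^t-1)` associated to the union of their point sets (the codeword of `x ∈ F_2^(2t)`
records the standard bilinear pairing of `x` with each point) is a minimal two-weight
code with nonzero weights `2·2^(t-1)` and `3·2^(t-1)`; in particular it is
`2^(t-1)`-divisible. -/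
theorem three_disjoint_subspaces_minimal_two_weight
    (t : ℕ) (ht : 2 ≤ t)
    (S₁ S₂ S₃ : Submodule (ZMod 2) (Fin (2 * t) → ZMod 2))
    (hS₁ : Module.finrank (ZMod 2) S₁ = t)
    (hS₂ : Module.finrank (ZMod 2) S₂ = t)
    (hS₃ : Module.finrank (ZMod 2) S₃ = t)
    (h12 : S₁ ⊓ S₂ = ⊥) (h13 : S₁ ⊓ S₃ = ⊥) (h23 : S₂ ⊓ S₃ = ⊥)
    (P : Set (Fin (2 * t) → ZMod 2))
    (hP : P = ((S₁ : Set (Fin (2 * t) → ZMod 2)) ∪ (S₂ : Set (Fin (2 * t) → ZMod 2)) ∪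
      (S₃ : Set (Fin (2 * t) → ZMod 2))) \ {0})
    (C : Submodule (ZMod 2) (P → ZMod 2))
    (hC : C = LinearMap.range (LinearMap.pi (fun p : P =>
      ∑ i : Fin (2 * t), (p : Fin (2 * t) → ZMod 2) i •
        (LinearMap.proj i : (Fin (2 * t) → ZMod 2) →ₗ[ZMod 2] ZMod 2)))) :
    Nat.card P = 3 * (2 ^ t - 1) ∧
    Module.finrank (ZMod 2) C = 2 * t ∧
    IsMinimalCode C ∧
    (∀ c ∈ C, c ≠ 0 → wt c = 2 * 2 ^ (t - 1) ∨ wt c = 3 * 2 ^ (t - 1)) ∧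
    (∃ c ∈ C, wt c = 2 * 2 ^ (t - 1)) ∧ (∃ c ∈ C, wt c = 3 * 2 ^ (t - 1)) ∧
    (∀ c ∈ C, 2 ^ (t - 1) ∣ wt c) ∧
    mDiv (ZMod 2) (2 * t) (2 ^ (t - 1)) ≤ 3 * (2 ^ t - 1) := by
    classical
  have hzm : ∀ a : ZMod 2, a = 0 ∨ a = 1 := by decide
  have hm1 : 1 ≤ 2 ^ (t - 1) := Nat.one_le_two_pow
  have hVrank : Module.finrank (ZMod 2) (Fin (2 * t) → ZMod 2) = 2 * t := by
    simp [Module.finrank_pi]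
  -- sup of two of the subspaces is everything
  have hsup : ∀ A B : Submodule (ZMod 2) (Fin (2 * t) → ZMod 2),
      Module.finrank (ZMod 2) A = t → Module.finrank (ZMod 2) B = t → A ⊓ B = ⊥ →
      A ⊔ B = ⊤ := by
    intro A B hA hB hAB
    apply Submodule.eq_top_of_finrank_eq
    have h := Submodule.finrank_sup_add_finrank_inf_eq A B
    rw [hAB, hA, hB] at h
    simp only [finrank_bot, add_zero] at h
    rw [h, hVrank]; ring
  have hvanish : ∀ (A B : Submodule (ZMod 2) (Fin (2 * t) → ZMod 2))
      (f : (Fin (2 * t) → ZMod 2) →ₗ[ZMod 2] ZMod 2), A ⊔ B = ⊤ →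
      (∀ s ∈ A, f s = 0) → (∀ s ∈ B, f s = 0) → f = 0 := by
    intro A B f hAB hA hB
    have hle : A ⊔ B ≤ LinearMap.ker f :=
      sup_le (fun s hs => LinearMap.mem_ker.mpr (hA s hs))
        (fun s hs => LinearMap.mem_ker.mpr (hB s hs))
    rw [hAB] at hle
    exact LinearMap.ker_eq_top.mp (top_le_iff.mp hle)
  -- realizing functionals from coordinates
  have hrealize : ∀ f : (Fin (2 * t) → ZMod 2) →ₗ[ZMod 2] ZMod 2,
      ∀ v, (∑ i, v i * f (fun j => if i = j then 1 else 0)) = f v := by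
    intro f v
    conv_rhs => rw [LinearMap.pi_apply_eq_sum_univ f v]
    simp [smul_eq_mul]
  set L := (LinearMap.pi (fun p : P =>
      ∑ i : Fin (2 * t), (p : Fin (2 * t) → ZMod 2) i •
        (LinearMap.proj i : (Fin (2 * t) → ZMod 2) →ₗ[ZMod 2] ZMod 2))) with hLdef
  have hLapp : ∀ x (p : P), L x p = ∑ i, (p : Fin (2 * t) → ZMod 2) i * x i := by
    intro x p
    simp [hLdef, LinearMap.pi_apply, LinearMap.sum_apply, LinearMap.smul_apply,
      LinearMap.proj_apply, smul_eq_mul]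
  -- every functional gives a codeword
  have hmemC : ∀ f : (Fin (2 * t) → ZMod 2) →ₗ[ZMod 2] ZMod 2,
      (fun p : P => f ↑p) ∈ C := by
    intro f
    rw [hC]
    exact ⟨fun i => f (fun j => if i = j then 1 else 0), by
      funext p; rw [hLapp]; exact hrealize f ↑p⟩
  -- every codeword comes from a functional
  have hCmem : ∀ c ∈ C, ∃ f : (Fin (2 * t) → ZMod 2) →ₗ[ZMod 2] ZMod 2,
      ∀ p : P, c p = f ↑p := by
    intro c hc
    rw [hC] at hc
    obtain ⟨x, rfl⟩ := hc
    refine ⟨∑ i, x i • LinearMap.proj i, fun p => ?_⟩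
    rw [hLapp]
    simp only [LinearMap.sum_apply, LinearMap.smul_apply, LinearMap.proj_apply, smul_eq_mul]
    exact Finset.sum_congr rfl fun i _ => mul_comm _ _
    -- key weight computation
  have key : ∀ f : (Fin (2 * t) → ZMod 2) →ₗ[ZMod 2] ZMod 2, f ≠ 0 →
      (wt (fun p : P => f ↑p) = 2 * 2 ^ (t - 1) ∨ wt (fun p : P => f ↑p) = 3 * 2 ^ (t - 1)) ∧
      (((∀ s ∈ S₁, f s = 0) ∨ (∀ s ∈ S₂, f s = 0) ∨ (∀ s ∈ S₃, f s = 0)) →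
        wt (fun p : P => f ↑p) = 2 * 2 ^ (t - 1)) ∧
      ((¬ (∀ s ∈ S₁, f s = 0)) ∧ (¬ (∀ s ∈ S₂, f s = 0)) ∧ (¬ (∀ s ∈ S₃, f s = 0)) →
        wt (fun p : P => f ↑p) = 3 * 2 ^ (t - 1)) := by
    intro f hf
    have hwt1 : wt (fun p : P => f ↑p) = {v | v ∈ P ∧ f v ≠ 0}.ncard := by
      rw [wt_def, ← Set.ncard_image_of_injective _ (Subtype.val_injective (p := (· ∈ P)))]
      congr 1
      ext v
      simp only [Set.mem_image, Set.mem_setOf_eq]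
      constructor
      · rintro ⟨⟨w, hw⟩, h, rfl⟩; exact ⟨hw, h⟩
      · rintro ⟨hv, h⟩; exact ⟨⟨v, hv⟩, h, rfl⟩
    have hPdec : {v | v ∈ P ∧ f v ≠ 0} =
        ({v | v ∈ S₁ ∧ f v ≠ 0} ∪ {v | v ∈ S₂ ∧ f v ≠ 0}) ∪ {v | v ∈ S₃ ∧ f v ≠ 0} := by
      rw [hP]; ext v
      simp only [Set.mem_setOf_eq, Set.mem_union, Set.mem_diff, Set.mem_singleton_iff,
        SetLike.mem_coe]
      constructor
      · rintro ⟨⟨(h | h) | h, -⟩, hfv⟩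
        · exact Or.inl (Or.inl ⟨h, hfv⟩)
        · exact Or.inl (Or.inr ⟨h, hfv⟩)
        · exact Or.inr ⟨h, hfv⟩
      · intro h
        have hv0 : f v ≠ 0 := by
          rcases h with (⟨-, h0⟩ | ⟨-, h0⟩) | ⟨-, h0⟩ <;> exact h0
        have hvne : v ≠ 0 := fun h0 => hv0 (by rw [h0, map_zero])
        rcases h with (⟨hm, -⟩ | ⟨hm, -⟩) | ⟨hm, -⟩
        · exact ⟨⟨Or.inl (Or.inl hm), hvne⟩, hv0⟩
        · exact ⟨⟨Or.inl (Or.inr hm), hvne⟩, hv0⟩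
        · exact ⟨⟨Or.inr hm, hvne⟩, hv0⟩
    have hdisj : ∀ A B : Submodule (ZMod 2) (Fin (2 * t) → ZMod 2), A ⊓ B = ⊥ →
        Disjoint {v | v ∈ A ∧ f v ≠ 0} {v | v ∈ B ∧ f v ≠ 0} := by
      intro A B hAB
      rw [Set.disjoint_left]
      rintro v ⟨hvA, hvf⟩ ⟨hvB, -⟩
      have hm : v ∈ A ⊓ B := ⟨hvA, hvB⟩
      rw [hAB, Submodule.mem_bot] at hm
      exact hvf (by rw [hm, map_zero])
    have hsum : wt (fun p : P => f ↑p) =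
        {v | v ∈ S₁ ∧ f v ≠ 0}.ncard + {v | v ∈ S₂ ∧ f v ≠ 0}.ncard +
          {v | v ∈ S₃ ∧ f v ≠ 0}.ncard := by
      rw [hwt1, hPdec,
        Set.ncard_union_eq (Disjoint.union_left (hdisj _ _ h13) (hdisj _ _ h23))
          (Set.toFinite _) (Set.toFinite _),
        Set.ncard_union_eq (hdisj _ _ h12) (Set.toFinite _) (Set.toFinite _)]
    have hcount : ∀ A : Submodule (ZMod 2) (Fin (2 * t) → ZMod 2),
        Module.finrank (ZMod 2) A = t →
        ({v | v ∈ A ∧ f v ≠ 0}.ncard = 0 ∧ (∀ s ∈ A, f s = 0)) ∨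
        ({v | v ∈ A ∧ f v ≠ 0}.ncard = 2 ^ (t - 1) ∧ ¬(∀ s ∈ A, f s = 0)) := by
      intro A hA
      by_cases h : ∀ s ∈ A, f s = 0
      · left
        refine ⟨?_, h⟩
        have he : {v | v ∈ A ∧ f v ≠ 0} = ∅ := by
          ext v
          exact iff_of_false (fun hv => hv.2 (h v hv.1)) (fun hv => hv)
        rw [he, Set.ncard_empty]
      · right
        refine ⟨?_, h⟩
        push_neg at h
        obtain ⟨s₀, hs₀, hfs₀⟩ := h
        have h2 := aux_half A f s₀ hs₀ hfs₀
        rw [aux_card_submodule, hA] at h2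
        have ht1 : 2 ^ t = 2 ^ (t - 1) * 2 := by
          rw [← pow_succ]
          congr 1
          omega
        rw [ht1] at h2
        omega
    have hno2 : ∀ A B : Submodule (ZMod 2) (Fin (2 * t) → ZMod 2),
        Module.finrank (ZMod 2) A = t → Module.finrank (ZMod 2) B = t → A ⊓ B = ⊥ →
        (∀ s ∈ A, f s = 0) → (∀ s ∈ B, f s = 0) → False := by
      intro A B hA hB hAB h1 h2
      exact hf (hvanish A B f (hsup A B hA hB hAB) h1 h2)
    rcases hcount S₁ hS₁ with ⟨e1, v1⟩ | ⟨e1, v1⟩ <;>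
      rcases hcount S₂ hS₂ with ⟨e2, v2⟩ | ⟨e2, v2⟩ <;>
      rcases hcount S₃ hS₃ with ⟨e3, v3⟩ | ⟨e3, v3⟩
    · exact absurd (hno2 S₁ S₂ hS₁ hS₂ h12 v1 v2) (fun h => h)
    · exact absurd (hno2 S₁ S₂ hS₁ hS₂ h12 v1 v2) (fun h => h)
    · exact absurd (hno2 S₁ S₃ hS₁ hS₃ h13 v1 v3) (fun h => h)
    · refine ⟨Or.inl ?_, fun _ => ?_, fun hv => absurd v1 (fun h => hv.1 h)⟩ <;>
        · rw [hsum, e1, e2, e3]; ring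
    · exact absurd (hno2 S₂ S₃ hS₂ hS₃ h23 v2 v3) (fun h => h)
    · refine ⟨Or.inl ?_, fun _ => ?_, fun hv => absurd v2 (fun h => hv.2.1 h)⟩ <;>
        · rw [hsum, e1, e2, e3]; ring
    · refine ⟨Or.inl ?_, fun _ => ?_, fun hv => absurd v3 (fun h => hv.2.2 h)⟩ <;>
        · rw [hsum, e1, e2, e3]; ring
    · have hw3 : wt (fun p : P => f ↑p) = 3 * 2 ^ (t - 1) := by
        rw [hsum, e1, e2, e3]; ring
      refine ⟨Or.inr hw3, ?_, fun _ => hw3⟩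
      rintro (h | h | h)
      · exact absurd h v1
      · exact absurd h v2
      · exact absurd h v3
    -- every nonzero codeword has one of the two weights
  have hfC : ∀ c ∈ C, c ≠ 0 → ∃ f : (Fin (2 * t) → ZMod 2) →ₗ[ZMod 2] ZMod 2,
      f ≠ 0 ∧ c = fun p : P => f ↑p := by
    intro c hc hc0
    obtain ⟨f, hpf⟩ := hCmem c hc
    have hceq : c = fun p : P => f ↑p := funext hpf
    refine ⟨f, ?_, hceq⟩
    intro hf0
    apply hc0
    rw [hceq, hf0]
    funext p
    simp
  have hwtC : ∀ c ∈ C, c ≠ 0 → wt c = 2 * 2 ^ (t - 1) ∨ wt c = 3 * 2 ^ (t - 1) := by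
    intro c hc hc0
    obtain ⟨f, hf, hceq⟩ := hfC c hc hc0
    rw [hceq]
    exact (key f hf).1
  have hwt0 : wt (0 : P → ZMod 2) = 0 := by
    rw [wt_def]
    have he : {i : P | (0 : P → ZMod 2) i ≠ 0} = ∅ := by
      ext p
      simp
    rw [he, Set.ncard_empty]
  have hdvd : ∀ c ∈ C, 2 ^ (t - 1) ∣ wt c := by
    intro c hc
    by_cases hc0 : c = 0
    · rw [hc0, hwt0]; exact dvd_zero _
    · rcases hwtC c hc hc0 with h | h <;> rw [h]
      · exact ⟨2, by ring⟩
      · exact ⟨3, by ring⟩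
    -- a codeword of weight 2·2^(t-1)
  have hex2 : ∃ c ∈ C, wt c = 2 * 2 ^ (t - 1) := by
    have hcompl : IsCompl S₂ S₁ :=
      ⟨disjoint_iff.mpr (by rw [inf_comm]; exact h12),
       codisjoint_iff.mpr (by rw [sup_comm]; exact hsup S₁ S₂ hS₁ hS₂ h12)⟩
    set π := Submodule.projectionOnto S₂ S₁ hcompl with hπ
    set b := Module.finBasisOfFinrankEq (ZMod 2) ↥S₂ hS₂ with hb
    set i₀ : Fin t := ⟨0, by omega⟩ with hi₀
    set f₀ := (b.coord i₀).comp π with hf₀def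
    have hvan : ∀ s ∈ S₁, f₀ s = 0 := by
      intro s hs
      show b.coord i₀ (π s) = 0
      rw [Submodule.projectionOnto_apply_of_mem_right hcompl hs, map_zero]
    have hf₀ : f₀ ≠ 0 := by
      intro h0
      have h1 : f₀ ↑(b i₀) = 1 := by
        show b.coord i₀ (π ↑(b i₀)) = 1
        rw [Submodule.linearProjOfIsCompl_apply_left hcompl (b i₀)]
        simp [Module.Basis.coord_apply, Module.Basis.repr_self]
      rw [h0] at h1
      simp only [LinearMap.zero_apply] at h1
      exact absurd h1 (by decide)
    exact ⟨_, hmemC f₀, (key f₀ hf₀).2.1 (Or.inl hvan)⟩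
    -- the map x ↦ (dot product with x)
  set Φ : (Fin (2 * t) → ZMod 2) →ₗ[ZMod 2]
      ((Fin (2 * t) → ZMod 2) →ₗ[ZMod 2] ZMod 2) :=
    { toFun := fun x => ∑ i, x i • (LinearMap.proj i :
        (Fin (2 * t) → ZMod 2) →ₗ[ZMod 2] ZMod 2)
      map_add' := by
        intro x y
        simp [add_smul, Finset.sum_add_distrib]
      map_smul' := by
        intro c x
        simp [smul_smul, Finset.smul_sum] } with hΦdef
  have hΦapp : ∀ x v, Φ x v = ∑ i, x i * v i := by
    intro x v
    simp [hΦdef, LinearMap.sum_apply, LinearMap.smul_apply, LinearMap.proj_apply, smul_eq_mul]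
  have hΦrealize : ∀ f : (Fin (2 * t) → ZMod 2) →ₗ[ZMod 2] ZMod 2,
      Φ (fun i => f (fun j => if i = j then 1 else 0)) = f := by
    intro f
    apply LinearMap.ext
    intro v
    rw [hΦapp, ← hrealize f v]
    exact Finset.sum_congr rfl fun i _ => mul_comm _ _
  -- the annihilator of a t-dimensional subspace has 2^t elements
  have hannih : ∀ A : Submodule (ZMod 2) (Fin (2 * t) → ZMod 2),
      Module.finrank (ZMod 2) A = t →
      {x | ∀ s ∈ A, Φ x s = 0}.ncard = 2 ^ t := by
    intro A hA
    set ρ : (Fin (2 * t) → ZMod 2) →ₗ[ZMod 2] (↥A →ₗ[ZMod 2] ZMod 2) :=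
      (LinearMap.lcomp (ZMod 2) (ZMod 2) A.subtype).comp Φ with hρdef
    have hρapp : ∀ x (s : ↥A), ρ x s = Φ x ↑s := fun x s => rfl
    have hsurj : Function.Surjective ρ := by
      intro g
      obtain ⟨B, hB⟩ := Submodule.exists_isCompl A
      set F : (Fin (2 * t) → ZMod 2) →ₗ[ZMod 2] ZMod 2 :=
        g.comp (Submodule.projectionOnto A B hB) with hFdef
      refine ⟨fun i => F (fun j => if i = j then 1 else 0), ?_⟩
      have h1 : ρ (fun i => F (fun j => if i = j then 1 else 0)) =
          F.comp A.subtype := by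
        show (Φ (fun i => F (fun j => if i = j then 1 else 0))).comp A.subtype = _
        rw [hΦrealize F]
      rw [h1]
      ext s
      show F ↑s = g s
      rw [hFdef]
      show g (Submodule.projectionOnto A B hB ↑s) = g s
      rw [Submodule.linearProjOfIsCompl_apply_left hB s]
    have hker : {x | ∀ s ∈ A, Φ x s = 0} = ((LinearMap.ker ρ : Submodule (ZMod 2)
        (Fin (2 * t) → ZMod 2)) : Set (Fin (2 * t) → ZMod 2)) := by
      ext x
      simp only [Set.mem_setOf_eq, SetLike.mem_coe, LinearMap.mem_ker]
      constructor
      · intro h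
        ext s
        exact h ↑s s.2
      · intro h s hs
        have := DFunLike.congr_fun h (⟨s, hs⟩ : ↥A)
        exact this
    rw [hker, aux_card_submodule]
    congr 1
    -- finrank of the kernel is t
    have hrank := LinearMap.finrank_range_add_finrank_ker ρ
    rw [LinearMap.range_eq_top.mpr hsurj, finrank_top] at hrank
    have hdual : Module.finrank (ZMod 2) (↥A →ₗ[ZMod 2] ZMod 2) = t := by
      have h := Subspace.dual_finrank_eq (K := ZMod 2) (V := ↥A)
      rw [hA] at h
      exact h
    rw [hdual, hVrank] at hrank
    omega
  -- a codeword of weight 3·2^(t-1)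
  have hex3 : ∃ c ∈ C, wt c = 3 * 2 ^ (t - 1) := by
    have h4 : 4 ≤ 2 ^ t := by
      calc 4 = 2 ^ 2 := by norm_num
      _ ≤ 2 ^ t := Nat.pow_le_pow_right (by norm_num) ht
    have hcardV : (Set.univ : Set (Fin (2 * t) → ZMod 2)).ncard = 2 ^ t * 2 ^ t := by
      have h := aux_card_submodule (⊤ : Submodule (ZMod 2) (Fin (2 * t) → ZMod 2))
      rw [finrank_top, hVrank] at h
      have h2 : 2 ^ t * 2 ^ t = 2 ^ (2 * t) := by
        rw [← pow_add]
        congr 1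
        omega
      rw [h2, ← h]
      congr 1
    have hexx : ∃ x : Fin (2 * t) → ZMod 2, x ∉
        ({x | ∀ s ∈ S₁, Φ x s = 0} ∪ {x | ∀ s ∈ S₂, Φ x s = 0} ∪
          {x | ∀ s ∈ S₃, Φ x s = 0}) := by
      by_contra hcon
      push_neg at hcon
      have huniv : (Set.univ : Set (Fin (2 * t) → ZMod 2)) =
          {x | ∀ s ∈ S₁, Φ x s = 0} ∪ {x | ∀ s ∈ S₂, Φ x s = 0} ∪
            {x | ∀ s ∈ S₃, Φ x s = 0} :=
        Set.eq_of_subset_of_subset (fun x _ => hcon x) (Set.subset_univ _)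
      have hle : (Set.univ : Set (Fin (2 * t) → ZMod 2)).ncard ≤ 3 * 2 ^ t := by
        rw [huniv]
        calc ({x | ∀ s ∈ S₁, Φ x s = 0} ∪ {x | ∀ s ∈ S₂, Φ x s = 0} ∪
            {x | ∀ s ∈ S₃, Φ x s = 0}).ncard
            ≤ ({x | ∀ s ∈ S₁, Φ x s = 0} ∪ {x | ∀ s ∈ S₂, Φ x s = 0}).ncard +
              {x | ∀ s ∈ S₃, Φ x s = 0}.ncard := Set.ncard_union_le _ _
          _ ≤ {x | ∀ s ∈ S₁, Φ x s = 0}.ncard + {x | ∀ s ∈ S₂, Φ x s = 0}.ncard +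
              {x | ∀ s ∈ S₃, Φ x s = 0}.ncard := by
                have := Set.ncard_union_le {x | ∀ s ∈ S₁, Φ x s = 0}
                  {x | ∀ s ∈ S₂, Φ x s = 0}
                omega
          _ = 3 * 2 ^ t := by
                rw [hannih S₁ hS₁, hannih S₂ hS₂, hannih S₃ hS₃]; ring
      rw [hcardV] at hle
      have hmul : 4 * 2 ^ t ≤ 2 ^ t * 2 ^ t := Nat.mul_le_mul_right _ h4
      omega
    obtain ⟨x, hx⟩ := hexx
    simp only [Set.mem_union, Set.mem_setOf_eq, not_or] at hx
    obtain ⟨⟨hx1, hx2⟩, hx3⟩ := hx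
    have hfx : Φ x ≠ 0 := by
      intro h0
      apply hx1
      intro s _
      rw [h0]
      simp
    exact ⟨_, hmemC (Φ x), (key (Φ x) hfx).2.2 ⟨hx1, hx2, hx3⟩⟩
    -- the generator map is injective, so the dimension is 2t
  have hLker : LinearMap.ker L = ⊥ := by
    rw [eq_bot_iff]
    intro x hx
    rw [LinearMap.mem_ker] at hx
    have hΦP : ∀ v ∈ P, Φ x v = 0 := by
      intro v hv
      have := congrFun hx (⟨v, hv⟩ : P)
      rw [hLapp] at this
      rw [hΦapp]
      rw [show (0 : P → ZMod 2) (⟨v, hv⟩ : P) = 0 from rfl] at this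
      rw [← this]
      exact Finset.sum_congr rfl fun i _ => mul_comm _ _
    have hvan : ∀ (A : Submodule (ZMod 2) (Fin (2 * t) → ZMod 2)),
        (A : Set (Fin (2 * t) → ZMod 2)) ⊆ (↑S₁ ∪ ↑S₂ ∪ ↑S₃) → ∀ s ∈ A, Φ x s = 0 := by
      intro A hsub s hs
      by_cases hs0 : s = 0
      · rw [hs0, map_zero]
      · apply hΦP
        rw [hP]
        exact ⟨hsub hs, hs0⟩
    have hΦ0 : Φ x = 0 := hvanish S₁ S₂ (Φ x) (hsup S₁ S₂ hS₁ hS₂ h12)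
      (hvan S₁ (fun v hv => Or.inl (Or.inl hv)))
      (hvan S₂ (fun v hv => Or.inl (Or.inr hv)))
    rw [Submodule.mem_bot]
    funext i
    show x i = (0 : ZMod 2)
    have h := DFunLike.congr_fun hΦ0 (fun j => if j = i then 1 else 0)
    rw [hΦapp] at h
    simp only [LinearMap.zero_apply, Pi.zero_apply] at h
    rw [← h]
    rw [Finset.sum_eq_single i]
    · simp
    · intro j _ hj
      simp [hj]
    · intro hi
      exact absurd (Finset.mem_univ i) hi
  have hrankC : Module.finrank (ZMod 2) C = 2 * t := by
    rw [hC]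
    have hrank := LinearMap.finrank_range_add_finrank_ker L
    rw [hLker, finrank_bot, add_zero, hVrank] at hrank
    exact hrank
  -- minimality
  have hmin : IsMinimalCode C := by
    intro c hc hc0 u hu hu0 hsub
    have hcu : u = c := by
      by_contra hne
      have hw : c - u ∈ C := C.sub_mem hc hu
      have hw0 : c - u ≠ 0 := sub_ne_zero.mpr (Ne.symm hne)
      have hsupp : {p : P | (c - u) p ≠ 0} = {p : P | c p ≠ 0} \ {p : P | u p ≠ 0} := by
        ext p
        simp only [Set.mem_setOf_eq, Set.mem_diff, Pi.sub_apply]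
        by_cases h : u p = 0
        · simp [h]
        · have hcp : c p ≠ 0 := hsub h
          have h1 : u p = 1 := (hzm (u p)).resolve_left h
          have h2 : c p = 1 := (hzm (c p)).resolve_left hcp
          rw [h1, h2]
          simp [h]
      have hadd : wt c = wt u + wt (c - u) := by
        rw [wt_def, wt_def, wt_def, hsupp,
          ← Set.ncard_union_eq Set.disjoint_sdiff_right (Set.toFinite _) (Set.toFinite _),
          Set.union_diff_cancel hsub]
      have w1 := hwtC c hc hc0
      have w2 := hwtC u hu hu0
      have w3 := hwtC _ hw hw0
      omega
    rw [hcu]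
  -- the cardinality of P
  have hcardP : Nat.card P = 3 * (2 ^ t - 1) := by
    rw [Nat.card_coe_set_eq, hP, Set.union_diff_distrib, Set.union_diff_distrib]
    have hdisj2 : ∀ A B : Submodule (ZMod 2) (Fin (2 * t) → ZMod 2), A ⊓ B = ⊥ →
        Disjoint ((A : Set (Fin (2 * t) → ZMod 2)) \ {0})
          ((B : Set (Fin (2 * t) → ZMod 2)) \ {0}) := by
      intro A B hAB
      rw [Set.disjoint_left]
      rintro v ⟨h1, hne⟩ ⟨h2, -⟩
      apply hne
      have hm : v ∈ A ⊓ B := ⟨h1, h2⟩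
      rw [hAB, Submodule.mem_bot] at hm
      simp [hm]
    have hcard1 : ∀ A : Submodule (ZMod 2) (Fin (2 * t) → ZMod 2),
        Module.finrank (ZMod 2) A = t →
        ((A : Set (Fin (2 * t) → ZMod 2)) \ {0}).ncard = 2 ^ t - 1 := by
      intro A hA
      rw [Set.ncard_diff_singleton_of_mem (by simp : (0 : Fin (2 * t) → ZMod 2) ∈
        (A : Set (Fin (2 * t) → ZMod 2))), aux_card_submodule, hA]
    rw [Set.ncard_union_eq (Disjoint.union_left (hdisj2 _ _ h13) (hdisj2 _ _ h23))
        (Set.toFinite _) (Set.toFinite _),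
      Set.ncard_union_eq (hdisj2 _ _ h12) (Set.toFinite _) (Set.toFinite _),
      hcard1 S₁ hS₁, hcard1 S₂ hS₂, hcard1 S₃ hS₃]
    have := Nat.one_le_two_pow (n := t)
    omega
    -- transport the code to `Fin (3 * (2 ^ t - 1))` to bound `mDiv`
  have hmdiv : mDiv (ZMod 2) (2 * t) (2 ^ (t - 1)) ≤ 3 * (2 ^ t - 1) := by
    have hfinP : Fintype ↥P := Fintype.ofFinite _
    have hcard' : Fintype.card ↥P = 3 * (2 ^ t - 1) := by
      rw [← Nat.card_eq_fintype_card, hcardP]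
    set e : Fin (3 * (2 ^ t - 1)) ≃ ↥P := (Fintype.equivFinOfCardEq hcard').symm with hedef
    set E : (↥P → ZMod 2) ≃ₗ[ZMod 2] (Fin (3 * (2 ^ t - 1)) → ZMod 2) :=
      LinearEquiv.funCongrLeft (ZMod 2) (ZMod 2) e with hEdef
    set C' : Submodule (ZMod 2) (Fin (3 * (2 ^ t - 1)) → ZMod 2) :=
      C.map (E : (↥P → ZMod 2) →ₗ[ZMod 2] (Fin (3 * (2 ^ t - 1)) → ZMod 2)) with hC'def
    have hsuppL : ∀ f : ↥P → ZMod 2,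
        {i | ((E : (↥P → ZMod 2) →ₗ[ZMod 2] (Fin (3 * (2 ^ t - 1)) → ZMod 2)) f) i ≠ 0} =
          e ⁻¹' {p | f p ≠ 0} := by
      intro f
      ext i
      exact Iff.rfl
    have hncard_pre : ∀ S : Set ↥P, (e ⁻¹' S).ncard = S.ncard := by
      intro S
      have h1 : e '' (e ⁻¹' S) = S := by
        rw [Equiv.image_preimage]
      rw [← Set.ncard_image_of_injective (e ⁻¹' S) e.injective, h1]
    have hwtE : ∀ f : ↥P → ZMod 2,
        wt ((E : (↥P → ZMod 2) →ₗ[ZMod 2] (Fin (3 * (2 ^ t - 1)) → ZMod 2)) f) = wt f := by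
      intro f
      rw [wt_def, wt_def, hsuppL, hncard_pre]
    have hpre : ∀ A B : Set ↥P, e ⁻¹' A ⊆ e ⁻¹' B → A ⊆ B := by
      intro A B h p hp
      have h2 := h (a := e.symm p) (by simp [Set.mem_preimage, hp])
      simpa using h2
    have hrank' : Module.finrank (ZMod 2) C' = 2 * t := by
      rw [hC'def, LinearEquiv.finrank_map_eq, hrankC]
    have hmin' : IsMinimalCode C' := by
      intro c' hc' hc'0 u' hu' hu'0 hsub'
      obtain ⟨c, hc, rfl⟩ := Submodule.mem_map.mp hc'
      obtain ⟨u, hu, rfl⟩ := Submodule.mem_map.mp hu'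
      have hc0 : c ≠ 0 := fun h => hc'0 (by rw [h, map_zero])
      have hu0 : u ≠ 0 := fun h => hu'0 (by rw [h, map_zero])
      rw [hsuppL c, hsuppL u] at hsub' ⊢
      have heq : {p : P | u p ≠ 0} = {p : P | c p ≠ 0} :=
        hmin c hc hc0 u hu hu0 (hpre _ _ hsub')
      rw [heq]
    have hdvd' : ∀ c' ∈ C', 2 ^ (t - 1) ∣ wt c' := by
      intro c' hc'
      obtain ⟨c, hc, rfl⟩ := Submodule.mem_map.mp hc'
      rw [hwtE]
      exact hdvd c hc
    exact Nat.sInf_le ⟨C', hrank', hmin', hdvd'⟩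
  exact ⟨hcardP, hrankC, hmin, hwtC, hex2, hex3, hdvd, hmdiv⟩
end

section
/- Let M be a strong blocking multiset of points in PG(k-1,q) with k ≥ 2, let Q be a point of PG(k-1,q), and let M_Q be the multiset of points in the quotient geometry PG(k-1,q)/Q ≅ PG(k-2,q) obtained by projection through Q, i.e., M_Q(L/Q) = M(L) - M(Q) for every line L of PG(k-1,q) through Q. Then the cardinality of M_Q equals #M - M(Q), the points of positive multiplicity of M_Q span the whole quotient space (of projective dimension k-2), and M_Q is a strong blocking multiset. -/
open Module

/-- For a multiplicity function `M` on submodules (supported on points, i.e. on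
one-dimensional subspaces), `msum M S` is the total multiplicity of the points contained
in the subspace `S`; `msum M ⊤` is the cardinality `#M` of the multiset `M`. -/
noncomputable def msum {F V : Type*} [Field F] [AddCommGroup V] [Module F V]
    (M : Submodule F V → ℕ) (S : Submodule F V) : ℕ :=
  ∑ᶠ (P : Submodule F V) (_ : P ≤ S), M P

section Aux

variable {F V : Type*} [Field F] [AddCommGroup V] [Module F V]

open Classical in
lemma msum_eq_sum [Fintype (Submodule F V)] (M : Submodule F V → ℕ) (S : Submodule F V) :
    msum M S = ∑ P : Submodule F V, if P ≤ S then M P else 0 := by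
  rw [msum, finsum_eq_sum_of_fintype]
  exact Finset.sum_congr rfl fun P _ => finsum_eq_if

variable [FiniteDimensional F V]

lemma point_inf_eq_bot {P Q : Submodule F V} (hP : finrank F P = 1)
    (hQ : finrank F Q = 1) (hne : P ≠ Q) : P ⊓ Q = ⊥ := by
  have h1 : finrank F ↥(P ⊓ Q) ≤ 1 := hP ▸ Submodule.finrank_mono inf_le_left
  rcases Nat.le_one_iff_eq_zero_or_eq_one.mp h1 with h | h
  · exact Submodule.finrank_eq_zero.mp h
  · exfalso
    apply hne
    have e1 : P ⊓ Q = P := Submodule.eq_of_le_of_finrank_eq inf_le_left (h.trans hP.symm)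
    have e2 : P ⊓ Q = Q := Submodule.eq_of_le_of_finrank_eq inf_le_right (h.trans hQ.symm)
    rw [← e1, e2]

lemma finrank_map_mkQ {Q S : Submodule F V} (h : S ⊓ Q = ⊥) :
    finrank F (S.map Q.mkQ) = finrank F S := by
  have h2 := LinearMap.finrank_range_add_finrank_ker (Q.mkQ.domRestrict S)
  rw [LinearMap.range_domRestrict, LinearMap.ker_domRestrict, Submodule.ker_mkQ] at h2
  have hker : Submodule.comap S.subtype Q = ⊥ := by
    ext x
    simp only [Submodule.mem_comap, Submodule.mem_bot, Submodule.coe_subtype]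
    constructor
    · intro hx
      have hx2 : (x : V) ∈ S ⊓ Q := ⟨x.2, hx⟩
      rw [h, Submodule.mem_bot] at hx2
      exact Subtype.ext hx2
    · rintro rfl; simp
  rw [hker, finrank_bot, add_zero] at h2
  exact h2

lemma finrank_comap_mkQ (Q : Submodule F V) (S' : Submodule F (V ⧸ Q)) :
    finrank F (S'.comap Q.mkQ) = finrank F S' + finrank F Q := by
  have h2 := LinearMap.finrank_range_add_finrank_ker (Q.mkQ.domRestrict (S'.comap Q.mkQ))
  rw [LinearMap.range_domRestrict, Submodule.map_comap_eq_of_surjective Q.mkQ_surjective,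
    LinearMap.ker_domRestrict, Submodule.ker_mkQ] at h2
  have hle : Q ≤ S'.comap Q.mkQ := by
    intro x hx
    have h0 : Q.mkQ x = 0 := by
      rw [Submodule.mkQ_apply, Submodule.Quotient.mk_eq_zero]; exact hx
    simp [Submodule.mem_comap, h0]
  rw [← h2, (Submodule.comapSubtypeEquivOfLe hle).finrank_eq]

lemma exists_superspace : ∀ (d : ℕ) (S : Submodule F V), finrank F S + d ≤ finrank F V →
    ∃ T, S ≤ T ∧ finrank F T = finrank F S + d := by
  intro d
  induction d with
  | zero => exact fun S _ => ⟨S, le_rfl, rfl⟩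
  | succ d ih =>
    intro S hS
    have hne : S ≠ ⊤ := by
      intro h
      rw [h, finrank_top] at hS
      omega
    obtain ⟨v, hv⟩ : ∃ v, v ∉ S := by
      by_contra h; push_neg at h; exact hne (Submodule.eq_top_iff'.mpr h)
    have hv0 : v ≠ 0 := fun h => hv (h ▸ S.zero_mem)
    have hinf : S ⊓ Submodule.span F {v} = ⊥ := by
      rw [Submodule.eq_bot_iff]
      intro x hx
      rw [Submodule.mem_inf] at hx
      rcases Submodule.mem_span_singleton.mp hx.2 with ⟨c, rfl⟩
      rcases eq_or_ne c 0 with rfl | hc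
      · simp
      · exact absurd (by simpa [smul_smul, inv_mul_cancel₀ hc] using S.smul_mem c⁻¹ hx.1) hv
    have hdim : finrank F ↥(S ⊔ Submodule.span F {v}) = finrank F S + 1 := by
      have h3 := Submodule.finrank_sup_add_finrank_inf_eq S (Submodule.span F {v})
      rw [hinf, finrank_bot, finrank_span_singleton hv0] at h3
      omega
    obtain ⟨T, hT1, hT2⟩ := ih (S ⊔ Submodule.span F {v}) (by omega)
    exact ⟨T, le_sup_left.trans hT1, by omega⟩

lemma exists_hyperplane (S : Submodule F V) (h : finrank F S ≤ finrank F V - 1)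
    (h0 : 1 ≤ finrank F V) : ∃ H, S ≤ H ∧ finrank F H = finrank F V - 1 := by
  obtain ⟨T, h1, h2⟩ := exists_superspace (finrank F V - 1 - finrank F S) S (by omega)
  exact ⟨T, h1, by omega⟩

end Aux

/-- Let `M` be a strong blocking multiset of points in `PG(k-1,q)` (realized as a
multiplicity function on the one-dimensional subspaces of a `k`-dimensional `F_q`-vector
space `V`, strong blocking meaning that for every hyperplane `H` the points of positive
multiplicity contained in `H` span `H`), let `Q` be a point, and let `M_Q` be the multiset
of points of the quotient geometry `PG(k-1,q)/Q ≅ PG(k-2,q)` obtained by projection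
through `Q`, i.e. `M_Q(L/Q) = M(L) - M(Q)` for every line `L` through `Q`. Then
`#M_Q = #M - M(Q)`, the points of positive multiplicity of `M_Q` span the whole quotient
space (which has projective dimension `k-2`), and `M_Q` is a strong blocking multiset. -/
theorem projection_of_strong_blocking_multiset
    {F V : Type*} [Field F] [Fintype F] [AddCommGroup V] [Module F V]
    [FiniteDimensional F V]
    (k : ℕ) (hk : 2 ≤ k) (hdim : finrank F V = k)
    (M : Submodule F V → ℕ)
    (hM : ∀ P : Submodule F V, M P ≠ 0 → finrank F P = 1)
    (hblock : ∀ H : Submodule F V, finrank F H = k - 1 →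
      (⨆ (P : Submodule F V) (_ : 0 < M P ∧ P ≤ H), P) = H)
    (Q : Submodule F V) (hQ : finrank F Q = 1)
    (MQ : Submodule F (V ⧸ Q) → ℕ)
    (hMQ : ∀ P' : Submodule F (V ⧸ Q), MQ P' =
      if finrank F P' = 1 then msum M (Submodule.comap Q.mkQ P') - M Q else 0) :
    msum MQ ⊤ = msum M ⊤ - M Q ∧
    finrank F (V ⧸ Q) = k - 1 ∧
    (⨆ (P' : Submodule F (V ⧸ Q)) (_ : 0 < MQ P'), P') = ⊤ ∧
    ∀ H' : Submodule F (V ⧸ Q), finrank F H' = k - 2 →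
      (⨆ (P' : Submodule F (V ⧸ Q)) (_ : 0 < MQ P' ∧ P' ≤ H'), P') = H' := by
  classical
  haveI : Finite V := Module.finite_of_finite F
  haveI : Finite (V ⧸ Q) := Quotient.finite _
  haveI : Finite (Submodule F V) :=
    Finite.of_injective (fun S : Submodule F V => (S : Set V)) SetLike.coe_injective
  haveI : Finite (Submodule F (V ⧸ Q)) :=
    Finite.of_injective (fun S : Submodule F (V ⧸ Q) => (S : Set (V ⧸ Q))) SetLike.coe_injective
  haveI : Fintype (Submodule F V) := Fintype.ofFinite _
  haveI : Fintype (Submodule F (V ⧸ Q)) := Fintype.ofFinite _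
  -- basic facts
  have hQle : ∀ S' : Submodule F (V ⧸ Q), Q ≤ S'.comap Q.mkQ := by
    intro S' x hx
    have h0 : Q.mkQ x = 0 := by
      rw [Submodule.mkQ_apply, Submodule.Quotient.mk_eq_zero]; exact hx
    simp [Submodule.mem_comap, h0]
  have hmapdim : ∀ P : Submodule F V, finrank F P = 1 → P ≠ Q →
      finrank F (P.map Q.mkQ) = 1 := by
    intro P h hne
    rw [finrank_map_mkQ (point_inf_eq_bot h hQ hne)]
    exact h
  have hMQpos : ∀ P : Submodule F V, 0 < M P → P ≠ Q → 0 < MQ (P.map Q.mkQ) := by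
    intro P hP hne
    have hp1 : finrank F P = 1 := hM P hP.ne'
    rw [hMQ, if_pos (hmapdim P hp1 hne)]
    have hle : P ≤ (P.map Q.mkQ).comap Q.mkQ := Submodule.le_comap_map _ _
    have hsum : M P + M Q ≤ msum M ((P.map Q.mkQ).comap Q.mkQ) := by
      rw [msum_eq_sum]
      calc M P + M Q
          = ∑ R ∈ ({P, Q} : Finset (Submodule F V)),
              (if R ≤ (P.map Q.mkQ).comap Q.mkQ then M R else 0) := by
            rw [Finset.sum_pair hne, if_pos hle, if_pos (hQle _)]
        _ ≤ _ := Finset.sum_le_sum_of_subset (Finset.subset_univ _)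
    omega
  have hbot : Submodule.map Q.mkQ Q = ⊥ :=
    le_bot_iff.mp (Submodule.map_le_iff_le_comap.mpr
      (by rw [Submodule.comap_bot, Submodule.ker_mkQ]))
  -- the weight function for the double counting
  set w : Submodule F (V ⧸ Q) → Submodule F V → ℕ := fun P' P =>
    if finrank F P' = 1 ∧ P ≤ Submodule.comap Q.mkQ P' ∧ P ≠ Q then M P else 0 with hw
  have hMQsum : ∀ P' : Submodule F (V ⧸ Q), MQ P' = ∑ P : Submodule F V, w P' P := by
    intro P'
    rw [hMQ]
    by_cases h1 : finrank F P' = 1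
    · rw [if_pos h1, msum_eq_sum]
      have hterm : ∀ P : Submodule F V,
          (if P ≤ Submodule.comap Q.mkQ P' then M P else 0)
            = (if P = Q then M Q else 0) + w P' P := by
        intro P
        by_cases hPQ : P = Q
        · subst hPQ
          simp [hw, hQle P']
        · simp only [hw]
          rw [if_neg hPQ, zero_add]
          by_cases hPC : P ≤ Submodule.comap Q.mkQ P'
          · rw [if_pos hPC, if_pos ⟨h1, hPC, hPQ⟩]
          · rw [if_neg hPC, if_neg (by tauto)]
      rw [Finset.sum_congr rfl fun P _ => hterm P, Finset.sum_add_distrib,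
        Finset.sum_ite_eq' Finset.univ Q (fun _ => M Q), if_pos (Finset.mem_univ Q),
        Nat.add_sub_cancel_left]
    · rw [if_neg h1]
      symm
      apply Finset.sum_eq_zero
      intro P _
      simp only [hw]
      exact if_neg (by tauto)
  -- conjunct 1
  have c1 : msum MQ ⊤ = msum M ⊤ - M Q := by
    rw [msum_eq_sum MQ ⊤, msum_eq_sum M ⊤]
    simp only [le_top, if_true]
    rw [Finset.sum_congr rfl fun P' _ => hMQsum P', Finset.sum_comm]
    have inner : ∀ P : Submodule F V,
        (∑ P' : Submodule F (V ⧸ Q), w P' P) = if P ≠ Q then M P else 0 := by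
      intro P
      by_cases hPQ : P = Q
      · subst hPQ
        rw [if_neg (by simp)]
        apply Finset.sum_eq_zero
        intro P' _
        simp only [hw]
        exact if_neg (by tauto)
      · rw [if_pos hPQ]
        by_cases hMP : M P = 0
        · rw [hMP]
          apply Finset.sum_eq_zero
          intro P' _
          simp only [hw, hMP, ite_self]
        · have hp1 : finrank F P = 1 := hM P hMP
          have heq : ∀ P' : Submodule F (V ⧸ Q),
              (finrank F P' = 1 ∧ P ≤ Submodule.comap Q.mkQ P' ∧ P ≠ Q)
                ↔ P' = P.map Q.mkQ := by
            intro P'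
            constructor
            · rintro ⟨h1, h2, _⟩
              have hle : P.map Q.mkQ ≤ P' := Submodule.map_le_iff_le_comap.mpr h2
              exact (Submodule.eq_of_le_of_finrank_eq hle
                (by rw [hmapdim P hp1 hPQ, h1])).symm
            · rintro rfl
              exact ⟨hmapdim P hp1 hPQ, Submodule.le_comap_map _ _, hPQ⟩
          have : ∀ P' : Submodule F (V ⧸ Q),
              w P' P = if P' = P.map Q.mkQ then M P else 0 := by
            intro P'
            simp only [hw]
            exact if_congr (heq P') rfl rfl
          rw [Finset.sum_congr rfl fun P' _ => this P',
            Finset.sum_ite_eq' Finset.univ (P.map Q.mkQ) (fun _ => M P),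
            if_pos (Finset.mem_univ _)]
    rw [Finset.sum_congr rfl fun P _ => inner P]
    have hsplit : ∑ P : Submodule F V, M P
        = M Q + ∑ P : Submodule F V, (if P ≠ Q then M P else 0) := by
      have hterm : ∀ P : Submodule F V,
          M P = (if P = Q then M Q else 0) + (if P ≠ Q then M P else 0) := by
        intro P
        by_cases h : P = Q <;> simp [h]
      rw [Finset.sum_congr rfl fun P _ => hterm P, Finset.sum_add_distrib,
        Finset.sum_ite_eq' Finset.univ Q (fun _ => M Q), if_pos (Finset.mem_univ Q)]
    omega
  -- conjunct 2
  have hquot := Submodule.finrank_quotient_add_finrank Q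
  have c2 : finrank F (V ⧸ Q) = k - 1 := by omega
  -- conjunct 4
  have c4 : ∀ H' : Submodule F (V ⧸ Q), finrank F H' = k - 2 →
      (⨆ (P' : Submodule F (V ⧸ Q)) (_ : 0 < MQ P' ∧ P' ≤ H'), P') = H' := by
    intro H' hH'
    apply le_antisymm
    · exact iSup_le fun P' => iSup_le fun hP' => hP'.2
    · have hC : finrank F ↥(Submodule.comap Q.mkQ H') = k - 1 := by
        rw [finrank_comap_mkQ, hH', hQ]
        omega
      conv_lhs => rw [← Submodule.map_comap_eq_of_surjective Q.mkQ_surjective H']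
      rw [← hblock _ hC, Submodule.map_iSup]
      apply iSup_le
      intro P
      rw [Submodule.map_iSup]
      apply iSup_le
      rintro ⟨hMP, hPC⟩
      by_cases hPQ : P = Q
      · subst hPQ
        rw [hbot]
        exact bot_le
      · exact le_iSup₂ (f := fun (P' : Submodule F (V ⧸ Q)) (_ : 0 < MQ P' ∧ P' ≤ H') => P')
          (P.map Q.mkQ) ⟨hMQpos P hMP hPQ, Submodule.map_le_iff_le_comap.mpr hPC⟩
  -- conjunct 3
  have c3 : (⨆ (P' : Submodule F (V ⧸ Q)) (_ : 0 < MQ P'), P') = ⊤ := by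
    set Y : Submodule F V := ⨆ (P : Submodule F V) (_ : 0 < M P ∧ P ≠ Q), P with hY
    have key : ∀ H₂ : Submodule F V, finrank F H₂ = k - 1 → H₂ ≤ Y ⊔ Q := by
      intro H₂ h₂
      rw [← hblock H₂ h₂]
      apply iSup_le
      intro P
      apply iSup_le
      rintro ⟨hMP, _⟩
      by_cases hPQ : P = Q
      · subst hPQ; exact le_sup_right
      · exact le_trans (le_iSup₂ (f := fun (P : Submodule F V) (_ : 0 < M P ∧ P ≠ Q) => P)
          P ⟨hMP, hPQ⟩) le_sup_left
    have hYQ : Y ⊔ Q = ⊤ := by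
      by_contra hne
      have h1 : finrank F ↥(Y ⊔ Q) ≤ k := hdim ▸ Submodule.finrank_le _
      have h2 : finrank F ↥(Y ⊔ Q) ≠ k := fun h =>
        hne (Submodule.eq_top_of_finrank_eq (by rw [h, hdim]))
      obtain ⟨H, hH1, hH2⟩ := exists_hyperplane (Y ⊔ Q) (by omega) (by omega)
      rw [hdim] at hH2
      have hHne : H ≠ ⊤ := fun h => by
        rw [h, finrank_top, hdim] at hH2
        omega
      obtain ⟨v, hv⟩ : ∃ v, v ∉ H := by
        by_contra h; push_neg at h; exact hHne (Submodule.eq_top_iff'.mpr h)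
      have hv0 : v ≠ 0 := fun h => hv (h ▸ H.zero_mem)
      obtain ⟨H₂, hs1, hs2⟩ := exists_hyperplane (Submodule.span F {v})
        (by rw [finrank_span_singleton hv0, hdim]; omega) (by omega)
      rw [hdim] at hs2
      exact hv (hH1 (key H₂ hs2 (hs1 (Submodule.mem_span_singleton_self v))))
    apply le_antisymm le_top
    have htop : (⊤ : Submodule F (V ⧸ Q)) = Submodule.map Q.mkQ (Y ⊔ Q) := by
      rw [hYQ, Submodule.map_top, Submodule.range_mkQ]
    rw [htop, Submodule.map_sup, hbot, sup_bot_eq, hY, Submodule.map_iSup]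
    apply iSup_le
    intro P
    rw [Submodule.map_iSup]
    apply iSup_le
    rintro ⟨hMP, hPQ⟩
    exact le_iSup₂ (f := fun (P' : Submodule F (V ⧸ Q)) (_ : 0 < MQ P') => P')
      (P.map Q.mkQ) (hMQpos P hMP hPQ)
  exact ⟨c1, c2, c3, c4⟩
end
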